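/- arXiv:2411.00806 — 3 statements merged into one kernel-verified Lean document; each statement's English description precedes it below -/
import Mathlib

section
/- If two families (t_1,…,t_N) and (t'_1,…,t'_N) of T₀ topologies on a finite set V induce the same edge-weight function w and the same dimension function d (defined in the context), then t_i = t'_i for every i = 1,…,N. In other words, multiple T₀-topologies on a finite point set are losslessly represented by the vertex-edge-weighted graph (V, E, w, d). -/
open scoped Classical

/-- The specialization relation of a topology: `x ≤_t y` iff `x` lies in the
closure of `{y}`. For a `T₀` topology this is a partial order. -/
def specLE {V : Type*} (t : TopologicalSpace V) (x y : V) : Prop :=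
  x ∈ @closure V t {y}

/-- Strict specialization. -/
def specLT {V : Type*} (t : TopologicalSpace V) (x y : V) : Prop :=
  specLE t x y ∧ x ≠ y

/-- `y` covers `x` in the specialization order: `x < y` with no strictly
intermediate point.  These covering pairs are the edges of the Hasse diagram. -/
def hasseCovers {V : Type*} (t : TopologicalSpace V) (x y : V) : Prop :=
  specLT t x y ∧ ∀ z, specLT t x z → specLT t z y → False

/-- `{x,y}` is an (undirected) edge of the Hasse diagram of the specialization
order of `t`. -/
def hasseEdge {V : Type*} (t : TopologicalSpace V) (x y : V) : Prop :=
  hasseCovers t x y ∨ hasseCovers t y x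

/-- The edge-weight function of a family of topologies `t i` with associated
primes `pr i`: `w({x,y}) = ∏_{i : {x,y} ∈ E(tᵢ)} pr i` (empty product `= 1`). -/
noncomputable def edgeWeight {V : Type*} {N : ℕ}
    (t : Fin N → TopologicalSpace V) (pr : Fin N → ℕ) (x y : V) : ℕ :=
  ∏ i : Fin N, if hasseEdge (t i) x y then pr i else 1

/-- The dimension (height) of a point `v` in the specialization order of `t`:
the maximal length `n` of a chain `x₀ < x₁ < ⋯ < xₙ = v` with top element `v`. -/
noncomputable def topoDim {V : Type*} (t : TopologicalSpace V) (v : V) : ℕ :=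
  sSup {n : ℕ | ∃ f : Fin (n + 1) → V, f (Fin.last n) = v ∧
    ∀ j k : Fin (n + 1), j < k → specLT t (f j) (f k)}

section Aux

variable {V : Type*}

/-- The set of chain lengths with top element `v`, for a general relation. -/
private def cSet (r : V → V → Prop) (v : V) : Set ℕ :=
  {n : ℕ | ∃ f : Fin (n + 1) → V, f (Fin.last n) = v ∧
    ∀ j k : Fin (n + 1), j < k → r (f j) (f k)}

private lemma topoDim_eq (t : TopologicalSpace V) (v : V) :
    topoDim t v = sSup (cSet (specLT t) v) := rfl

private lemma zero_mem_cSet (r : V → V → Prop) (v : V) : 0 ∈ cSet r v :=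
  ⟨fun _ => v, rfl, fun j k h => by
    have hj := j.isLt; have hk := k.isLt
    exact absurd (Fin.lt_def.mp h) (by omega)⟩

private lemma cSet_bddAbove [Fintype V] {r : V → V → Prop}
    (hirr : ∀ x, ¬ r x x) (v : V) : BddAbove (cSet r v) := by
  refine ⟨Fintype.card V, fun n hn => ?_⟩
  obtain ⟨f, -, hf⟩ := hn
  have hinj : Function.Injective f := by
    intro j k hjk
    by_contra hne
    rcases lt_or_gt_of_ne hne with h | h
    · have := hf j k h; rw [hjk] at this; exact hirr _ this
    · have := hf k j h; rw [hjk] at this; exact hirr _ this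
  have hcard := Fintype.card_le_of_injective f hinj
  simp only [Fintype.card_fin] at hcard
  omega

private lemma sSup_mem_cSet [Fintype V] {r : V → V → Prop}
    (hirr : ∀ x, ¬ r x x) (v : V) : sSup (cSet r v) ∈ cSet r v :=
  Nat.sSup_mem ⟨0, zero_mem_cSet r v⟩ (cSet_bddAbove hirr v)

private lemma succ_mem_cSet {r : V → V → Prop}
    (htr : ∀ a b c, r a b → r b c → r a c)
    {x y : V} {n : ℕ} (hx : n ∈ cSet r x) (h : r x y) : n + 1 ∈ cSet r y := by
  obtain ⟨f, hlast, hf⟩ := hx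
  refine ⟨fun j => if hj : (j : ℕ) < n + 1 then f ⟨j, hj⟩ else y, ?_, ?_⟩
  · have hnl : ¬ ((Fin.last (n + 1) : Fin (n + 2)) : ℕ) < n + 1 := by
      simp [Fin.last]
    exact dif_neg hnl
  · intro j k hjk
    have hjk' : (j : ℕ) < (k : ℕ) := hjk
    have hkle : (k : ℕ) < n + 2 := k.isLt
    have hj1 : (j : ℕ) < n + 1 := by omega
    by_cases hk1 : (k : ℕ) < n + 1
    · simp only [dif_pos hj1, dif_pos hk1]
      exact hf ⟨j, hj1⟩ ⟨k, hk1⟩ (Fin.mk_lt_mk.mpr hjk')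
    · simp only [dif_pos hj1, dif_neg hk1]
      by_cases hjn : (j : ℕ) = n
      · have hje : (⟨(j : ℕ), hj1⟩ : Fin (n + 1)) = Fin.last n := by
          ext; simp [Fin.last, hjn]
        rw [hje, hlast]; exact h
      · have hjlt : (j : ℕ) < n := by omega
        have h1 : r (f ⟨j, hj1⟩) (f (Fin.last n)) :=
          hf ⟨j, hj1⟩ (Fin.last n) (Fin.mk_lt_mk.mpr (by omega))
        rw [hlast] at h1
        exact htr _ _ _ h1 h

private lemma sSup_lt_of_rel [Fintype V] {r : V → V → Prop}
    (hirr : ∀ x, ¬ r x x) (htr : ∀ a b c, r a b → r b c → r a c)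
    {x y : V} (h : r x y) : sSup (cSet r x) < sSup (cSet r y) := by
  have hmem : sSup (cSet r x) + 1 ∈ cSet r y :=
    succ_mem_cSet htr (sSup_mem_cSet hirr x) h
  have := le_csSup (cSet_bddAbove hirr y) hmem
  omega

private lemma transGen_of_rel [Fintype V] {r : V → V → Prop}
    (hirr : ∀ x, ¬ r x x) (htr : ∀ a b c, r a b → r b c → r a c) :
    ∀ n x y, r x y → sSup (cSet r y) - sSup (cSet r x) = n →
      Relation.TransGen (fun a b => r a b ∧ ∀ z, r a z → r z b → False) x y := by
  intro n
  induction n using Nat.strong_induction_on with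
  | _ n ih =>
    intro x y hxy hn
    by_cases hc : ∃ z, r x z ∧ r z y
    · obtain ⟨z, hxz, hzy⟩ := hc
      have h1 := sSup_lt_of_rel hirr htr hxz
      have h2 := sSup_lt_of_rel hirr htr hzy
      have h3 := sSup_lt_of_rel hirr htr hxy
      exact (ih _ (by omega) x z hxz rfl).trans (ih _ (by omega) z y hzy rfl)
    · exact Relation.TransGen.single ⟨hxy, fun z h1 h2 => hc ⟨z, h1, h2⟩⟩

variable [tV : TopologicalSpace V]

private lemma specLE_iff_specializes (x y : V) :
    specLE tV x y ↔ y ⤳ x :=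
  (specializes_iff_mem_closure).symm

private lemma specLT_irrefl : ∀ x : V, ¬ specLT tV x x :=
  fun _ h => h.2 rfl

private lemma specLT_trans [T0Space V] :
    ∀ a b c : V, specLT tV a b → specLT tV b c → specLT tV a c := by
  rintro a b c ⟨hab, hne1⟩ ⟨hbc, hne2⟩
  refine ⟨?_, ?_⟩
  · exact (specLE_iff_specializes a c).mpr
      (((specLE_iff_specializes b c).mp hbc).trans ((specLE_iff_specializes a b).mp hab))
  · rintro rfl
    exact hne2 (Specializes.antisymm ((specLE_iff_specializes _ _).mp hab)
      ((specLE_iff_specializes _ _).mp hbc)).eq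

private lemma hasseCovers_iff [T0Space V] [Fintype V] (x y : V) :
    hasseCovers tV x y ↔ hasseEdge tV x y ∧ topoDim tV x < topoDim tV y := by
  constructor
  · intro h
    refine ⟨Or.inl h, ?_⟩
    rw [topoDim_eq, topoDim_eq]
    exact sSup_lt_of_rel specLT_irrefl specLT_trans h.1
  · rintro ⟨(h | h), hlt⟩
    · exact h
    · exfalso
      have := sSup_lt_of_rel specLT_irrefl specLT_trans h.1
      rw [← topoDim_eq, ← topoDim_eq] at this
      omega

private lemma specLT_iff_transGen [T0Space V] [Fintype V] (x y : V) :
    specLT tV x y ↔ Relation.TransGen (hasseCovers tV) x y := by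
  constructor
  · intro h
    exact transGen_of_rel specLT_irrefl specLT_trans _ x y h rfl
  · intro h
    induction h with
    | single h => exact h.1
    | tail _ h2 ih => exact specLT_trans _ _ _ ih h2.1

private lemma specLE_iff_eq_or_lt (x y : V) :
    specLE tV x y ↔ x = y ∨ specLT tV x y := by
  constructor
  · intro h
    by_cases he : x = y
    · exact Or.inl he
    · exact Or.inr ⟨h, he⟩
  · rintro (rfl | h)
    · exact subset_closure (Set.mem_singleton x)
    · exact h.1

end Aux

private lemma dvd_edgeWeight_iff {V : Type*} {N : ℕ}
    (t : Fin N → TopologicalSpace V) (pr : Fin N → ℕ)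
    (hpr : ∀ i, Nat.Prime (pr i)) (hpr_inj : Function.Injective pr)
    (i : Fin N) (x y : V) :
    pr i ∣ edgeWeight t pr x y ↔ hasseEdge (t i) x y := by
  unfold edgeWeight
  rw [(hpr i).prime.dvd_finset_prod_iff]
  constructor
  · rintro ⟨j, -, hj⟩
    split_ifs at hj with h
    · have hij : pr i = pr j := (Nat.prime_dvd_prime_iff_eq (hpr i) (hpr j)).mp hj
      rwa [hpr_inj hij]
    · exact absurd (Nat.dvd_one.mp hj) (hpr i).ne_one
  · intro h
    exact ⟨i, Finset.mem_univ i, by simp [h]⟩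

/-- **Lossless representation of multiple `T₀`-topologies on a finite point set**:
if two families `(t₁,…,t_N)` and `(t'₁,…,t'_N)` of `T₀` topologies on a finite set
`V` induce the same edge-weight function `w` (built from pairwise distinct primes
`p₁,…,p_N`) and the same dimension function `d`, then `tᵢ = t'ᵢ` for all `i`. -/
theorem multi_topologies_lossless_representation {V : Type*} [Fintype V]
    {N : ℕ} (hN : 1 ≤ N)
    (t t' : Fin N → TopologicalSpace V)
    (ht : ∀ i, @T0Space V (t i)) (ht' : ∀ i, @T0Space V (t' i))
    (pr : Fin N → ℕ) (hpr : ∀ i, Nat.Prime (pr i))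
    (hpr_inj : Function.Injective pr)
    (hw : ∀ x y : V, edgeWeight t pr x y = edgeWeight t' pr x y)
    (hd : ∀ i (v : V), topoDim (t i) v = topoDim (t' i) v) :
    ∀ i, t i = t' i := by
  have hedge : ∀ i (x y : V), hasseEdge (t i) x y ↔ hasseEdge (t' i) x y := by
    intro i x y
    rw [← dvd_edgeWeight_iff t pr hpr hpr_inj i x y,
      ← dvd_edgeWeight_iff t' pr hpr hpr_inj i x y, hw]
  intro i
  have hcov : ∀ x y : V, hasseCovers (t i) x y ↔ hasseCovers (t' i) x y := by
    intro x y
    rw [@hasseCovers_iff V (t i) (ht i) _ x y, @hasseCovers_iff V (t' i) (ht' i) _ x y,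
      hedge i x y, hd i x, hd i y]
  have hlt : ∀ x y : V, specLT (t i) x y ↔ specLT (t' i) x y := by
    intro x y
    rw [@specLT_iff_transGen V (t i) (ht i) _ x y,
      @specLT_iff_transGen V (t' i) (ht' i) _ x y]
    constructor
    · exact (Relation.TransGen.mono fun a b h => (hcov a b).mp h) x y
    · exact (Relation.TransGen.mono fun a b h => (hcov a b).mpr h) x y
  have hle : ∀ x y : V, specLE (t i) x y ↔ specLE (t' i) x y := by
    intro x y
    rw [@specLE_iff_eq_or_lt V (t i) x y, @specLE_iff_eq_or_lt V (t' i) x y, hlt x y]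
  have hspec : ∀ x y : V, @Specializes V (t i) x y ↔ @Specializes V (t' i) x y := by
    intro x y
    rw [← @specLE_iff_specializes V (t i) y x, ← @specLE_iff_specializes V (t' i) y x,
      hle y x]
  rw [TopologicalSpace.ext_iff]
  intro s
  haveI : Finite V := Finite.of_fintype V
  rw [@isOpen_iff_forall_specializes V (t i) (@Finite.toAlexandrovDiscrete V (t i) _) s,
    @isOpen_iff_forall_specializes V (t' i) (@Finite.toAlexandrovDiscrete V (t' i) _) s]
  constructor
  · intro h x y hxy hy
    exact h x y ((hspec x y).mpr hxy) hy
  · intro h x y hxy hy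
    exact h x y ((hspec x y).mp hxy) hy
end

section
/- For every x ∈ B, ∫_B |x − y|_p^{−α} (ψ_{B,j}(y) − ψ_{B,j}(x)) dμ(y) = −p^{d(α−1)} · ψ_{B,j}(x); that is, the Kozyrev wavelet ψ_{B,j} is an eigenfunction of the Vladimirov-type integral operator on the ball B with eigenvalue −p^{d(α−1)}. (The integrand vanishes whenever y lies in the same child subball as x, so it is bounded and integrable despite the singular kernel.) -/
open MeasureTheory

/-- The **Kozyrev wavelet** `ψ_{B,j}` attached to the ball
`B = {x ∈ ℚ_p : |x − b|_p ≤ p^{−d}}`, a primitive `p`-th root of unity `ζ` and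
`j ∈ {1,…,p−1}`: writing `x = b + p^d·u` with `u ∈ ℤ_p`, set
`ψ_{B,j}(x) = ζ^{j·(u mod p)}` for `x ∈ B` and `ψ_{B,j}(x) = 0` otherwise. -/
noncomputable def kozyrevWavelet (p : ℕ) [hp : Fact p.Prime] (b : ℚ_[p]) (d : ℤ)
    (ζ : ℂ) (j : ℕ) (x : ℚ_[p]) : ℂ :=
  if h : ‖x - b‖ ≤ (p : ℝ) ^ (-d) then
    ζ ^ (j * (PadicInt.toZMod (⟨(x - b) / (p : ℚ_[p]) ^ d, by
      have hp1 : (1 : ℝ) < p := by exact_mod_cast hp.out.one_lt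
      have hpos : (0 : ℝ) < (p : ℝ) ^ (-d) := zpow_pos (by linarith) _
      show ‖(x - b) / (p : ℚ_[p]) ^ d‖ ≤ 1
      rw [norm_div, norm_zpow, Padic.norm_p, inv_zpow, ← zpow_neg,
        div_le_one hpos]
      exact h⟩ : ℤ_[p])).val)
  else 0

set_option linter.unusedSectionVars false

variable {p : ℕ} [hp : Fact p.Prime]

lemma padic_norm_le_inv_iff (z : ℤ_[p]) : ‖z‖ ≤ (p:ℝ)⁻¹ ↔ z ∈ IsLocalRing.maximalIdeal ℤ_[p] := by
  rw [IsLocalRing.mem_maximalIdeal, PadicInt.mem_nonunits]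
  constructor
  · intro h
    refine lt_of_le_of_lt h ?_
    rw [inv_lt_one_iff₀]
    right; exact_mod_cast hp.out.one_lt
  · intro h
    have := (PadicInt.norm_lt_pow_iff_norm_le_pow_sub_one z 0).mp (by simpa using h)
    simpa using this

lemma padic_toZMod_eq_iff (z : ℤ_[p]) (v : ZMod p) :
    PadicInt.toZMod z = v ↔ ‖z - (v.val : ℤ_[p])‖ ≤ (p:ℝ)⁻¹ := by
  rw [padic_norm_le_inv_iff, ← PadicInt.ker_toZMod, RingHom.mem_ker, map_sub, map_natCast,
    ZMod.natCast_val, ZMod.cast_id, sub_eq_zero]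

lemma padic_mem_ball_iff_unit (b : ℚ_[p]) (d : ℤ) (y : ℚ_[p]) :
    ‖y - b‖ ≤ (p : ℝ) ^ (-d) ↔ ‖(y - b) / (p : ℚ_[p]) ^ d‖ ≤ 1 := by
  have hp1 : (1 : ℝ) < p := by exact_mod_cast hp.out.one_lt
  have hpos : (0 : ℝ) < (p : ℝ) ^ (-d) := zpow_pos (by linarith) _
  rw [norm_div, norm_zpow, Padic.norm_p, inv_zpow, ← zpow_neg, div_le_one hpos]

/-- The unit part `(y - b)/p^d` of a point of the ball `B(b, p^{-d})`. -/
noncomputable def padicUnit (b : ℚ_[p]) (d : ℤ) (y : ℚ_[p])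
    (h : ‖y - b‖ ≤ (p : ℝ) ^ (-d)) : ℤ_[p] :=
  ⟨(y - b) / (p : ℚ_[p]) ^ d, (padic_mem_ball_iff_unit b d y).mp h⟩

lemma kozyrevWavelet_of_mem (b : ℚ_[p]) (d : ℤ) (ζ : ℂ) (j : ℕ) (y : ℚ_[p])
    (h : ‖y - b‖ ≤ (p : ℝ) ^ (-d)) :
    kozyrevWavelet p b d ζ j y
      = (ζ ^ j) ^ ((PadicInt.toZMod (padicUnit b d y h)).val) := by
  rw [kozyrevWavelet, dif_pos h, ← pow_mul]
  rfl

lemma padicUnit_digit_eq_iff (b : ℚ_[p]) (d : ℤ) (y : ℚ_[p])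
    (h : ‖y - b‖ ≤ (p : ℝ) ^ (-d)) (v : ZMod p) :
    PadicInt.toZMod (padicUnit b d y h) = v
      ↔ ‖y - (b + (v.val : ℚ_[p]) * (p : ℚ_[p]) ^ d)‖ ≤ (p : ℝ) ^ (-(d+1)) := by
  have hp0 : (0 : ℝ) < p := by exact_mod_cast hp.out.pos
  have hpd : (0:ℝ) < (p:ℝ) ^ (-d) := zpow_pos hp0 _
  have hpq : ((p : ℚ_[p]) ^ d) ≠ 0 := zpow_ne_zero _ (by exact_mod_cast hp.out.ne_zero)
  rw [padic_toZMod_eq_iff]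
  have hnorm : ‖(padicUnit b d y h) - ((v.val : ℕ) : ℤ_[p])‖
      = ‖y - (b + (v.val : ℚ_[p]) * (p : ℚ_[p]) ^ d)‖ / (p:ℝ) ^ (-d) := by
    rw [PadicInt.norm_def]
    have : (((padicUnit b d y h) - ((v.val : ℕ) : ℤ_[p]) : ℤ_[p]) : ℚ_[p])
        = (y - (b + (v.val : ℚ_[p]) * (p : ℚ_[p]) ^ d)) / (p : ℚ_[p]) ^ d := by
      rw [PadicInt.coe_sub, PadicInt.coe_natCast]
      show ((y - b) / (p:ℚ_[p])^d - (v.val:ℚ_[p])) = _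
      field_simp
      ring
    rw [this, norm_div, norm_zpow, Padic.norm_p, inv_zpow, ← zpow_neg]
  have hkey : (p:ℝ)⁻¹ * (p:ℝ)^(-d) = (p:ℝ) ^ (-(d+1)) := by
    rw [← zpow_neg_one, ← zpow_add₀ (ne_of_gt hp0)]; ring_nf
  rw [hnorm, div_le_iff₀ hpd, ← hkey]

lemma padic_setOf_eq_closedBall (c : ℚ_[p]) (r : ℝ) :
    {y : ℚ_[p] | ‖y - c‖ ≤ r} = Metric.closedBall c r := by
  ext y; simp [Metric.mem_closedBall, dist_eq_norm]

lemma padic_nat_norm_eq_one {i i' : ℕ} (hi : i < p) (hi' : i' < p) (hne : i ≠ i') :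
    ‖((i : ℚ_[p]) - (i' : ℚ_[p]))‖ = 1 := by
  have h1 : ((i : ℚ_[p]) - (i' : ℚ_[p])) = (((i : ℤ) - (i' : ℤ) : ℤ) : ℚ_[p]) := by push_cast; ring
  rw [h1]
  refine le_antisymm (Padic.norm_int_le_one _) ?_
  by_contra hlt
  push_neg at hlt
  have hdvd : (p : ℤ) ∣ ((i : ℤ) - (i' : ℤ)) :=
    Padic.norm_intCast_lt_one_iff.mp hlt
  have h0 : (((i : ℤ) - (i' : ℤ) : ℤ) : ZMod p) = 0 :=
    (ZMod.intCast_zmod_eq_zero_iff_dvd _ p).mpr hdvd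
  push_cast at h0
  have : (i : ZMod p) = (i' : ZMod p) := by linear_combination h0
  apply hne
  have := congrArg ZMod.val this
  rwa [ZMod.val_cast_of_lt hi, ZMod.val_cast_of_lt hi'] at this

section Measure

variable [MeasurableSpace ℚ_[p]] [BorelSpace ℚ_[p]]
variable (μ : Measure ℚ_[p]) [μ.IsAddHaarMeasure]

lemma padic_measure_closedBall_center (c : ℚ_[p]) (r : ℝ) :
    μ (Metric.closedBall c r) = μ (Metric.closedBall 0 r) := by
  have h : (fun y => c + y) ⁻¹' Metric.closedBall c r = Metric.closedBall 0 r := by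
    ext y; simp [Metric.mem_closedBall, dist_eq_norm]
  rw [← h, measure_preimage_add]

lemma padic_closedBall_union (k : ℤ) :
    Metric.closedBall (0:ℚ_[p]) ((p:ℝ)^(-k))
      = ⋃ i ∈ Finset.range p, Metric.closedBall ((i:ℚ_[p]) * (p:ℚ_[p])^k) ((p:ℝ)^(-(k+1))) := by
  have hp0 : (0 : ℝ) < p := by exact_mod_cast hp.out.pos
  ext y
  simp only [Set.mem_iUnion, Metric.mem_closedBall, dist_eq_norm, Finset.mem_range]
  constructor
  · intro hy
    have hy' : ‖y - 0‖ ≤ (p:ℝ)^(-k) := by simpa using hy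
    set v := PadicInt.toZMod (padicUnit 0 k y hy') with hv
    refine ⟨v.val, ZMod.val_lt v, ?_⟩
    have := (padicUnit_digit_eq_iff 0 k y hy' v).mp rfl
    simpa using this
  · intro ⟨i, hi, hyi⟩
    have h1 : ‖(i:ℚ_[p]) * (p:ℚ_[p])^k‖ ≤ (p:ℝ)^(-k) := by
      rw [norm_mul, norm_zpow, Padic.norm_p, inv_zpow, ← zpow_neg]
      have : ‖(i:ℚ_[p])‖ ≤ 1 := by
        have := Padic.norm_int_le_one (p := p) i
        simpa using this
      nlinarith [zpow_pos hp0 (-k)]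
    have h2 : (p:ℝ)^(-(k+1)) ≤ (p:ℝ)^(-k) := by
      have hp1 : (1:ℝ) ≤ p := by exact_mod_cast hp.out.one_le
      exact zpow_le_zpow_right₀ hp1 (by omega)
    have := Padic.nonarchimedean (y - (i:ℚ_[p]) * (p:ℚ_[p])^k) ((i:ℚ_[p]) * (p:ℚ_[p])^k)
    rw [sub_add_cancel] at this
    rw [sub_zero]
    calc ‖y‖ ≤ max ‖y - (i:ℚ_[p]) * (p:ℚ_[p])^k‖ ‖(i:ℚ_[p]) * (p:ℚ_[p])^k‖ := this
      _ ≤ (p:ℝ)^(-k) := max_le (le_trans hyi h2) h1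

end Measure

section Measure2

variable [MeasurableSpace ℚ_[p]] [BorelSpace ℚ_[p]]
variable (μ : Measure ℚ_[p]) [μ.IsAddHaarMeasure]

lemma padic_closedBall_disjoint (k : ℤ) {i i' : ℕ} (hi : i < p) (hi' : i' < p) (hne : i ≠ i') :
    Disjoint (Metric.closedBall ((i:ℚ_[p]) * (p:ℚ_[p])^k) ((p:ℝ)^(-(k+1))))
      (Metric.closedBall ((i':ℚ_[p]) * (p:ℚ_[p])^k) ((p:ℝ)^(-(k+1)))) := by
  have hp0 : (0 : ℝ) < p := by exact_mod_cast hp.out.pos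
  rw [Set.disjoint_left]
  intro y hy hy'
  simp only [Metric.mem_closedBall, dist_eq_norm] at hy hy'
  have hkey : ((i:ℚ_[p]) - i') * (p:ℚ_[p])^k
      = (y - (i':ℚ_[p]) * (p:ℚ_[p])^k) - (y - (i:ℚ_[p]) * (p:ℚ_[p])^k) := by ring
  have h1 : ‖((i:ℚ_[p]) - i') * (p:ℚ_[p])^k‖ = (p:ℝ)^(-k) := by
    rw [norm_mul, padic_nat_norm_eq_one hi hi' hne, one_mul, norm_zpow,
      Padic.norm_p, inv_zpow, ← zpow_neg]
  have h2 : ‖(y - (i':ℚ_[p]) * (p:ℚ_[p])^k) - (y - (i:ℚ_[p]) * (p:ℚ_[p])^k)‖ ≤ (p:ℝ)^(-(k+1)) := by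
    have := Padic.nonarchimedean (y - (i':ℚ_[p]) * (p:ℚ_[p])^k)
      (-(y - (i:ℚ_[p]) * (p:ℚ_[p])^k))
    rw [← sub_eq_add_neg] at this
    refine le_trans this (max_le hy' ?_)
    rwa [norm_neg]
  rw [hkey, h1] at *
  have hlt : (p:ℝ)^(-(k+1)) < (p:ℝ)^(-k) := by
    have hp1 : (1:ℝ) < p := by exact_mod_cast hp.out.one_lt
    exact zpow_lt_zpow_right₀ hp1 (by omega)
  linarith [h1 ▸ h2]

lemma padic_measure_ball_rec (k : ℤ) :
    μ (Metric.closedBall (0:ℚ_[p]) ((p:ℝ)^(-k)))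
      = p * μ (Metric.closedBall (0:ℚ_[p]) ((p:ℝ)^(-(k+1)))) := by
  rw [padic_closedBall_union (p := p) k]
  rw [measure_biUnion_finset ?_ (fun i _ => measurableSet_closedBall)]
  · rw [Finset.sum_congr rfl (fun i _ => padic_measure_closedBall_center μ _ _)]
    simp [Finset.sum_const, mul_comm]
  · intro i hi i' hi' hne
    simp only [Finset.mem_coe, Finset.mem_range] at hi hi'
    exact padic_closedBall_disjoint k hi hi' hne

lemma padic_measure_ball_ne_top (r : ℝ) : μ (Metric.closedBall (0:ℚ_[p]) r) ≠ ⊤ :=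
  (isCompact_closedBall _ _).measure_lt_top.ne

lemma padic_measure_ball (hμ : μ {x : ℚ_[p] | ‖x‖ ≤ 1} = 1) (k : ℤ) :
    μ (Metric.closedBall (0:ℚ_[p]) ((p:ℝ)^(-k))) = (p : ENNReal) ^ (-k) := by
  have hp0 : (p : ENNReal) ≠ 0 := by exact_mod_cast hp.out.ne_zero
  have hpt : (p : ENNReal) ≠ ⊤ := ENNReal.natCast_ne_top p
  have hbase : μ (Metric.closedBall (0:ℚ_[p]) ((p:ℝ)^(-(0:ℤ)))) = 1 := by
    rw [← hμ]
    congr 1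
    ext y; simp [Metric.mem_closedBall, dist_eq_norm]
  have hmul : ∀ m : ℤ, (p:ENNReal) * (p:ENNReal)^m = (p:ENNReal)^(1+m) := fun m => by
    rw [ENNReal.zpow_add hp0 hpt, zpow_one]
  induction k using Int.induction_on with
  | zero => simpa using hbase
  | succ n ih =>
    have hrec := padic_measure_ball_rec (p := p) μ n
    rw [ih] at hrec
    have h2 : (p : ENNReal) * (p : ENNReal) ^ (-(n+1:ℤ)) = (p : ENNReal) ^ (-(n:ℤ)) := by
      rw [hmul]; congr 1; ring
    rw [← h2] at hrec
    exact (ENNReal.mul_right_inj hp0 hpt).mp hrec.symm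
  | pred n ih =>
    have hrec := padic_measure_ball_rec (p := p) μ (-(n+1:ℤ))
    rw [show (-(-(n+1:ℤ))) = -(-(n:ℤ)-1) by ring] at hrec
    rw [show (-((-(n+1:ℤ))+1)) = -(-(n:ℤ)) by ring] at hrec
    rw [hrec, ih, hmul]
    congr 1
    ring
end Measure2

lemma ennreal_natCast_zpow_toReal (k : ℤ) : (((p:ENNReal))^k).toReal = (p:ℝ)^k := by
  rcases k with n | n
  · simp [ENNReal.toReal_pow]
  · simp [zpow_negSucc, ENNReal.toReal_inv, ENNReal.toReal_pow]

lemma padic_norm_sub_of_ne_digit (b : ℚ_[p]) (d : ℤ) (x y : ℚ_[p])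
    (hx : ‖x - b‖ ≤ (p : ℝ) ^ (-d)) (hy : ‖y - b‖ ≤ (p : ℝ) ^ (-d))
    (hne : PadicInt.toZMod (padicUnit b d x hx) ≠ PadicInt.toZMod (padicUnit b d y hy)) :
    ‖x - y‖ = (p : ℝ) ^ (-d) := by
  have hp0 : (0 : ℝ) < p := by exact_mod_cast hp.out.pos
  have hp1 : (1 : ℝ) < p := by exact_mod_cast hp.out.one_lt
  set u := PadicInt.toZMod (padicUnit b d x hx) with hu
  set v := PadicInt.toZMod (padicUnit b d y hy) with hv
  have hxu := (padicUnit_digit_eq_iff b d x hx u).mp rfl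
  have hyv := (padicUnit_digit_eq_iff b d y hy v).mp rfl
  have hvals : u.val ≠ v.val := fun h => hne (by
    have := congrArg (Nat.cast : ℕ → ZMod p) h
    rwa [ZMod.natCast_val, ZMod.cast_id, ZMod.natCast_val, ZMod.cast_id] at this)
  have hb' : ‖((u.val:ℚ_[p]) - (v.val:ℚ_[p])) * (p:ℚ_[p])^d‖ = (p:ℝ)^(-d) := by
    rw [norm_mul, padic_nat_norm_eq_one (ZMod.val_lt u) (ZMod.val_lt v) hvals, one_mul,
      norm_zpow, Padic.norm_p, inv_zpow, ← zpow_neg]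
  have ha : ‖(x - (b + (u.val:ℚ_[p]) * (p:ℚ_[p])^d)) - (y - (b + (v.val:ℚ_[p]) * (p:ℚ_[p])^d))‖
      ≤ (p:ℝ)^(-(d+1)) := by
    have := Padic.nonarchimedean (x - (b + (u.val:ℚ_[p]) * (p:ℚ_[p])^d))
      (-(y - (b + (v.val:ℚ_[p]) * (p:ℚ_[p])^d)))
    rw [← sub_eq_add_neg] at this
    refine le_trans this (max_le hxu ?_)
    rwa [norm_neg]
  have hlt : (p:ℝ)^(-(d+1)) < (p:ℝ)^(-d) := zpow_lt_zpow_right₀ hp1 (by omega)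
  have hsplit : x - y = ((x - (b + (u.val:ℚ_[p]) * (p:ℚ_[p])^d))
      - (y - (b + (v.val:ℚ_[p]) * (p:ℚ_[p])^d)))
      + ((u.val:ℚ_[p]) - (v.val:ℚ_[p])) * (p:ℚ_[p])^d := by ring
  rw [hsplit, Padic.add_eq_max_of_ne (by rw [hb']; exact ne_of_lt (lt_of_le_of_lt ha hlt)),
    hb', max_eq_right (le_of_lt (lt_of_le_of_lt ha hlt))]

lemma zmod_sum_primroot (ζ : ℂ) (hζ : IsPrimitiveRoot ζ p) (j : ℕ) (hj1 : 1 ≤ j) (hj2 : j ≤ p - 1) :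
    ∑ v : ZMod p, (ζ ^ j) ^ (v.val) = 0 := by
  have hp1 : 1 < p := hp.out.one_lt
  have hcop : j.Coprime p := Nat.Coprime.symm (hp.out.coprime_iff_not_dvd.mpr (by
    intro hdvd
    have := Nat.le_of_dvd (by omega) hdvd
    omega))
  have hprim : IsPrimitiveRoot (ζ ^ j) p := hζ.pow_of_coprime j hcop
  have := hprim.geom_sum_eq_zero hp1
  rw [← this]
  refine Finset.sum_nbij' (fun v => v.val) (fun i => (i : ZMod p)) ?_ ?_ ?_ ?_ ?_
  · intro v _; simp [Finset.mem_range, ZMod.val_lt]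
  · intro i _; simp
  · intro v _; simp [ZMod.natCast_val, ZMod.cast_id]
  · intro i hi; simp only [Finset.mem_range] at hi; exact ZMod.val_cast_of_lt hi
  · intro v _; rfl

theorem kozyrev_eigenfunction_on_ball' (p : ℕ) [Fact p.Prime]
    [MeasurableSpace ℚ_[p]] [BorelSpace ℚ_[p]]
    (μ : Measure ℚ_[p]) [μ.IsAddHaarMeasure]
    (hμ : μ {x : ℚ_[p] | ‖x‖ ≤ 1} = 1)
    (α : ℝ) (b : ℚ_[p]) (d : ℤ)
    (ζ : ℂ) (hζ : IsPrimitiveRoot ζ p)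
    (j : ℕ) (hj1 : 1 ≤ j) (hj2 : j ≤ p - 1)
    (x : ℚ_[p]) (hx : ‖x - b‖ ≤ (p : ℝ) ^ (-d)) :
    ∫ y in {y : ℚ_[p] | ‖y - b‖ ≤ (p : ℝ) ^ (-d)},
        (‖x - y‖ ^ (-α)) • (kozyrevWavelet p b d ζ j y - kozyrevWavelet p b d ζ j x) ∂μ
      = (-((p : ℝ) ^ ((d : ℝ) * (α - 1)))) • kozyrevWavelet p b d ζ j x := by
  have hp0 : (0 : ℝ) < p := by exact_mod_cast ‹Fact p.Prime›.out.pos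
  have hp1 : (1 : ℝ) < p := by exact_mod_cast ‹Fact p.Prime›.out.one_lt
  set B : Set ℚ_[p] := {y : ℚ_[p] | ‖y - b‖ ≤ (p : ℝ) ^ (-d)} with hB
  set u : ZMod p := PadicInt.toZMod (padicUnit b d x hx) with hu
  set C : ZMod p → Set ℚ_[p] :=
    fun v => {y : ℚ_[p] | ‖y - (b + (v.val : ℚ_[p]) * (p : ℚ_[p]) ^ d)‖ ≤ (p:ℝ)^(-(d+1))}
    with hC
  set c : ZMod p → ℂ :=
    fun v => ((p:ℝ)^((d:ℝ)*α)) • ((ζ^j)^(v.val) - (ζ^j)^(u.val)) with hc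
  have hBmeas : MeasurableSet B := by
    rw [hB, padic_setOf_eq_closedBall]; exact measurableSet_closedBall
  have hCmeas : ∀ v, MeasurableSet (C v) := fun v => by
    have h : C v = Metric.closedBall (b + (v.val:ℚ_[p]) * (p:ℚ_[p])^d) ((p:ℝ)^(-(d+1))) :=
      padic_setOf_eq_closedBall _ _
    rw [h]; exact measurableSet_closedBall
  have hCsub : ∀ v, C v ⊆ B := by
    intro v y hy
    simp only [hC, Set.mem_setOf_eq] at hy
    simp only [hB, Set.mem_setOf_eq]
    have h1 : ‖(v.val:ℚ_[p]) * (p:ℚ_[p])^d‖ ≤ (p:ℝ)^(-d) := by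
      rw [norm_mul, norm_zpow, Padic.norm_p, inv_zpow, ← zpow_neg]
      have h2 : ‖((v.val:ℕ):ℚ_[p])‖ ≤ 1 := by
        have := Padic.norm_int_le_one (p := p) (v.val)
        simpa using this
      nlinarith [zpow_pos hp0 (-d)]
    have h2 : (p:ℝ)^(-(d+1)) ≤ (p:ℝ)^(-d) := zpow_le_zpow_right₀ (le_of_lt hp1) (by omega)
    have hsplit : y - b = (y - (b + (v.val:ℚ_[p]) * (p:ℚ_[p])^d)) + (v.val:ℚ_[p]) * (p:ℚ_[p])^d := by
      ring
    rw [hsplit]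
    exact le_trans (Padic.nonarchimedean _ _) (max_le (le_trans hy h2) h1)
  have hCvol : ∀ v, μ (C v) = (p : ENNReal) ^ (-(d+1)) := fun v => by
    have h : C v = Metric.closedBall (b + (v.val:ℚ_[p]) * (p:ℚ_[p])^d) ((p:ℝ)^(-(d+1))) :=
      padic_setOf_eq_closedBall _ _
    rw [h, padic_measure_closedBall_center, padic_measure_ball μ hμ]
  -- pointwise description of the integrand on B
  have hfg : Set.EqOn
      (fun y => (‖x - y‖ ^ (-α)) • (kozyrevWavelet p b d ζ j y - kozyrevWavelet p b d ζ j x))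
      (fun y => ∑ v : ZMod p, Set.indicator (C v) (fun _ => c v) y) B := by
    intro y hyB
    simp only [hB, Set.mem_setOf_eq] at hyB
    set w : ZMod p := PadicInt.toZMod (padicUnit b d y hyB) with hw
    have hRHS : (∑ v : ZMod p, Set.indicator (C v) (fun _ => c v) y) = c w := by
      refine Finset.sum_eq_single_of_mem w (Finset.mem_univ w) ?_ |>.trans ?_
      · intro v _ hv
        refine Set.indicator_of_notMem ?_ _
        intro hyv
        exact hv ((padicUnit_digit_eq_iff b d y hyB v).mpr hyv).symm
      · have hyw : y ∈ C w := (padicUnit_digit_eq_iff b d y hyB w).mp rfl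
        exact Set.indicator_of_mem hyw _
    show (‖x - y‖ ^ (-α)) • (kozyrevWavelet p b d ζ j y - kozyrevWavelet p b d ζ j x)
        = ∑ v : ZMod p, Set.indicator (C v) (fun _ => c v) y
    rw [hRHS, kozyrevWavelet_of_mem b d ζ j y hyB, kozyrevWavelet_of_mem b d ζ j x hx, ← hw, ← hu]
    by_cases hwu : w = u
    · rw [hwu, sub_self, smul_zero, hc]
      simp
    · have hnorm : ‖x - y‖ = (p:ℝ)^(-d) :=
        padic_norm_sub_of_ne_digit b d x y hx hyB (by rw [← hu, ← hw]; exact fun h => hwu h.symm)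
      rw [hnorm, hc]
      congr 1
      rw [← Real.rpow_intCast (p:ℝ) (-d), ← Real.rpow_mul (le_of_lt hp0)]
      congr 1
      push_cast
      ring
  rw [setIntegral_congr_fun hBmeas hfg]
  have hint : ∀ v : ZMod p, Integrable (fun y => Set.indicator (C v) (fun _ => c v) y)
      (μ.restrict B) := by
    intro v
    rw [integrable_indicator_iff (hCmeas v)]
    refine integrableOn_const (ne_of_lt ?_)
    calc (μ.restrict B) (C v) ≤ μ (C v) := Measure.restrict_apply_le _ _
      _ < ⊤ := by rw [hCvol v]; exact ENNReal.zpow_lt_top (by exact_mod_cast ‹Fact p.Prime›.out.ne_zero) (ENNReal.natCast_ne_top p) _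
  rw [integral_finset_sum _ (fun v _ => hint v)]
  have hterm : ∀ v : ZMod p,
      (∫ y in B, Set.indicator (C v) (fun _ => c v) y ∂μ) = ((p:ℝ)^(-(d+1))) • c v := by
    intro v
    rw [setIntegral_indicator (hCmeas v), Set.inter_eq_right.mpr (hCsub v), setIntegral_const,
      measureReal_def, hCvol v, ennreal_natCast_zpow_toReal]
  rw [Finset.sum_congr rfl (fun v _ => hterm v), ← Finset.smul_sum, hc]
  simp only []
  rw [← Finset.smul_sum, Finset.sum_sub_distrib, zmod_sum_primroot ζ hζ j hj1 hj2,
    Finset.sum_const, zero_sub]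
  rw [kozyrevWavelet_of_mem b d ζ j x hx, ← hu]
  have hcard : (Finset.univ : Finset (ZMod p)).card = p := by
    rw [Finset.card_univ, ZMod.card]
  rw [hcard]
  -- now pure scalar arithmetic
  have hreal : ((p:ℝ)^(-(d+1):ℤ)) * ((p:ℝ)^((d:ℝ)*α)) * (p:ℝ) = (p:ℝ)^((d:ℝ)*(α-1)) := by
    have h1 : ((p:ℝ)^(-(d+1):ℤ)) = (p:ℝ)^((-(d:ℝ)-1) : ℝ) := by
      rw [← Real.rpow_intCast]; congr 1; push_cast; ring
    rw [h1, ← Real.rpow_add hp0, ← Real.rpow_add_one (ne_of_gt hp0)]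
    congr 1
    ring
  have hrealC : (((p:ℝ)^(-(d+1):ℤ) : ℝ) : ℂ) * (((p:ℝ)^((d:ℝ)*α) : ℝ) : ℂ) * (p:ℂ)
      = (((p:ℝ)^((d:ℝ)*(α-1)) : ℝ) : ℂ) := by exact_mod_cast hreal
  rw [smul_smul, Complex.real_smul, Complex.real_smul, nsmul_eq_mul]
  push_cast at hrealC ⊢
  linear_combination (-((ζ^j)^(u.val))) * hrealC


/-- **Kozyrev wavelets are eigenfunctions of the Vladimirov-type operator on the
ball `B`**: for `x ∈ B`,
`∫_B |x − y|_p^{−α}(ψ_{B,j}(y) − ψ_{B,j}(x)) dμ(y) = −p^{d(α−1)}·ψ_{B,j}(x)`,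
where `μ` is the Haar measure on `ℚ_p` with `μ(ℤ_p) = 1`. -/
theorem kozyrev_eigenfunction_on_ball (p : ℕ) [Fact p.Prime]
    [MeasurableSpace ℚ_[p]] [BorelSpace ℚ_[p]]
    (μ : Measure ℚ_[p]) [μ.IsAddHaarMeasure]
    (hμ : μ {x : ℚ_[p] | ‖x‖ ≤ 1} = 1)
    (α : ℝ) (b : ℚ_[p]) (d : ℤ)
    (ζ : ℂ) (hζ : IsPrimitiveRoot ζ p)
    (j : ℕ) (hj1 : 1 ≤ j) (hj2 : j ≤ p - 1)
    (x : ℚ_[p]) (hx : ‖x - b‖ ≤ (p : ℝ) ^ (-d)) :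
    ∫ y in {y : ℚ_[p] | ‖y - b‖ ≤ (p : ℝ) ^ (-d)},
        (‖x - y‖ ^ (-α)) • (kozyrevWavelet p b d ζ j y - kozyrevWavelet p b d ζ j x) ∂μ
      = (-((p : ℝ) ^ ((d : ℝ) * (α - 1)))) • kozyrevWavelet p b d ζ j x := by
  exact kozyrev_eigenfunction_on_ball' p μ hμ α b d ζ hζ j hj1 hj2 x hx
end

section
/- Let v ∈ V, let B = {x : |x − b|_p ≤ p^{−d}} ⊆ U_v be a ball contained in U_v (so d ≥ r_v), let j ∈ {1,…,p−1}, and let ψ = ψ_{B,j} be the Kozyrev wavelet. Then for every x ∈ Z, H ψ(x) = λ_B · ψ(x), where λ_B = −p^{d(α−1)} − ∫_{U_v∖B} |y − b|_p^{−α} dμ(y) − ∑_{w ∈ V, w ≠ v} K(v,w)·μ(U_w). In particular every Kozyrev wavelet supported in one of the vertex balls is an eigenfunction of the p-adic graph Laplacian H. (Kozyrev-wavelet part of the spectral theorem for H_• on L²(Z, dx).) -/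
set_option linter.unusedSectionVars false


open MeasureTheory

/-- The vertex whose ball contains `x` (junk value if there is none). -/
noncomputable def vertexOf {p : ℕ} [Fact p.Prime] {V : Type*} [Nonempty V]
    (U : V → Set ℚ_[p]) (x : ℚ_[p]) : V :=
  haveI := Classical.propDecidable (∃ v, x ∈ U v)
  if h : ∃ v, x ∈ U v then h.choose else Classical.arbitrary V

/-- The kernel `k_p(x,y) = |x − y|_p^{−α}` if `x, y` lie in the same vertex ball,
and `k_p(x,y) = K(v(x), v(y))` otherwise. -/
noncomputable def graphKernel {p : ℕ} [Fact p.Prime] {V : Type*} [Nonempty V]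
    [DecidableEq V] (U : V → Set ℚ_[p]) (α : ℝ) (K : V → V → ℝ)
    (x y : ℚ_[p]) : ℝ :=
  if vertexOf U x = vertexOf U y then ‖x - y‖ ^ (-α)
  else K (vertexOf U x) (vertexOf U y)

/-- The p-adic graph Laplacian `H u (x) = ∫_Z k_p(x,y)(u(y) − u(x)) dμ(y)` on
`Z = ⋃_v U_v`. -/
noncomputable def graphLaplacian {p : ℕ} [Fact p.Prime] {V : Type*} [Nonempty V]
    [DecidableEq V] [MeasurableSpace ℚ_[p]] (μ : Measure ℚ_[p])
    (U : V → Set ℚ_[p]) (α : ℝ) (K : V → V → ℝ) (u : ℚ_[p] → ℂ) (x : ℚ_[p]) : ℂ :=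
  ∫ y in ⋃ v, U v, graphKernel U α K x y • (u y - u x) ∂μ

section Aux
variable {p : ℕ} [hp : Fact p.Prime]

private lemma pR1 : (1:ℝ) < (p:ℝ) := by exact_mod_cast hp.out.one_lt
private lemma pR0 : (0:ℝ) < (p:ℝ) := lt_trans one_pos pR1

private lemma pzpow_pos (m : ℤ) : (0:ℝ) < (p:ℝ) ^ m := zpow_pos pR0 m

private lemma pnorm_ultra (a c : ℚ_[p]) (b : ℚ_[p]) : ‖a - c‖ ≤ max ‖a - b‖ ‖b - c‖ := by
  have h := Padic.nonarchimedean (a - b) (b - c)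
  simpa using h

private lemma pnorm_sub_le_max (a b : ℚ_[p]) : ‖a - b‖ ≤ max ‖a‖ ‖b‖ := by
  have h := Padic.nonarchimedean a (-b)
  simpa [sub_eq_add_neg] using h

private lemma pnorm_dominant {a c : ℚ_[p]} (h : ‖c‖ < ‖a‖) : ‖a + c‖ = ‖a‖ := by
  rw [Padic.add_eq_max_of_ne (ne_of_gt h)]
  exact max_eq_left h.le

private lemma pnorm_exact {z : ℚ_[p]} {m : ℤ} (h1 : ‖z‖ ≤ (p:ℝ) ^ (-m))
    (h2 : ¬ ‖z‖ ≤ (p:ℝ) ^ (-(m+1))) : ‖z‖ = (p:ℝ) ^ (-m) := by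
  have hz : z ≠ 0 := by
    rintro rfl
    exact h2 (by simpa using (pzpow_pos (p := p) (-(m+1))).le)
  rw [Padic.norm_eq_zpow_neg_valuation hz] at h1 h2 ⊢
  rw [zpow_le_zpow_iff_right₀ pR1] at h1
  rw [zpow_le_zpow_iff_right₀ pR1] at h2
  congr 1
  omega

/-- The residue index of `z` at level `m`. -/
noncomputable def presidue (m : ℤ) (z : ℚ_[p]) : ℕ :=
  if h : ‖z‖ ≤ (p : ℝ) ^ (-m) then
    (PadicInt.toZMod (⟨z / (p : ℚ_[p]) ^ m, by
      have hp1 : (1 : ℝ) < p := by exact_mod_cast hp.out.one_lt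
      have hpos : (0 : ℝ) < (p : ℝ) ^ (-m) := zpow_pos (by linarith) _
      show ‖z / (p : ℚ_[p]) ^ m‖ ≤ 1
      rw [norm_div, norm_zpow, Padic.norm_p, inv_zpow, ← zpow_neg,
        div_le_one hpos]
      exact h⟩ : ℤ_[p])).val
  else 0

lemma kozyrevWavelet_apply (b : ℚ_[p]) (d : ℤ) (ζ : ℂ) (j : ℕ) {x : ℚ_[p]}
    (h : ‖x - b‖ ≤ (p:ℝ) ^ (-d)) :
    kozyrevWavelet p b d ζ j x = ζ ^ (j * presidue d (x - b)) := by
  rw [kozyrevWavelet, presidue, dif_pos h, dif_pos h]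

lemma kozyrevWavelet_eq_zero (b : ℚ_[p]) (d : ℤ) (ζ : ℂ) (j : ℕ) {x : ℚ_[p]}
    (h : ¬ ‖x - b‖ ≤ (p:ℝ) ^ (-d)) :
    kozyrevWavelet p b d ζ j x = 0 := by
  rw [kozyrevWavelet, dif_neg h]

lemma presidue_lt (m : ℤ) (z : ℚ_[p]) : presidue m z < p := by
  haveI : NeZero p := ⟨hp.out.ne_zero⟩
  rw [presidue]
  split
  · exact ZMod.val_lt _
  · exact hp.out.pos

private lemma toZMod_residue_norm (u : ℤ_[p]) :
    ‖u - ((PadicInt.toZMod u).val : ℤ_[p])‖ ≤ (p:ℝ) ^ (-1:ℤ) := by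
  haveI : NeZero p := ⟨hp.out.ne_zero⟩
  have h0 : PadicInt.toZMod (u - ((PadicInt.toZMod u).val : ℤ_[p])) = 0 := by
    rw [map_sub, map_natCast, ZMod.natCast_val, ZMod.cast_id, sub_self]
  have hmem : (p : ℤ_[p]) ∣ (u - ((PadicInt.toZMod u).val : ℤ_[p])) := by
    have : (u - ((PadicInt.toZMod u).val : ℤ_[p])) ∈ RingHom.ker (PadicInt.toZMod (p := p)) :=
      RingHom.mem_ker.2 h0
    rwa [PadicInt.ker_toZMod, PadicInt.maximalIdeal_eq_span_p,
      Ideal.mem_span_singleton] at this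
  have hlt : ‖u - ((PadicInt.toZMod u).val : ℤ_[p])‖ < 1 :=
    (PadicInt.norm_lt_one_iff_dvd _).2 hmem
  rw [PadicInt.norm_le_pow_iff_norm_lt_pow_add_one]
  simpa using hlt

private lemma norm_sub_val_mul_zpow (m : ℤ) (z : ℚ_[p]) (u : ℤ_[p])
    (huz : (u : ℚ_[p]) = z / (p:ℚ_[p]) ^ m) :
    ‖z - ((PadicInt.toZMod u).val : ℚ_[p]) * (p:ℚ_[p]) ^ m‖ ≤ (p:ℝ) ^ (-(m+1)) := by
  have hpne : ((p:ℚ_[p]) ^ m) ≠ 0 :=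
    zpow_ne_zero _ (Nat.cast_ne_zero.2 hp.out.ne_zero)
  have heq : z - ((PadicInt.toZMod u).val : ℚ_[p]) * (p:ℚ_[p]) ^ m
      = (((u - ((PadicInt.toZMod u).val : ℤ_[p])) : ℤ_[p]) : ℚ_[p]) * (p:ℚ_[p]) ^ m := by
    push_cast
    rw [huz]
    field_simp
  rw [heq, norm_mul, Padic.norm_p_zpow]
  have hnn : ‖(((u - ((PadicInt.toZMod u).val : ℤ_[p])) : ℤ_[p]) : ℚ_[p])‖
      = ‖(u - ((PadicInt.toZMod u).val : ℤ_[p]) : ℤ_[p])‖ := rfl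
  rw [hnn]
  calc ‖(u - ((PadicInt.toZMod u).val : ℤ_[p]) : ℤ_[p])‖ * (p:ℝ) ^ (-m)
      ≤ (p:ℝ) ^ (-1:ℤ) * (p:ℝ) ^ (-m) := by
        exact mul_le_mul_of_nonneg_right (toZMod_residue_norm u) (pzpow_pos (-m)).le
    _ = (p:ℝ) ^ (-(m+1)) := by
        rw [← zpow_add₀ (ne_of_gt pR0)]
        congr 1
        omega

lemma presidue_spec {m : ℤ} {z : ℚ_[p]} (h : ‖z‖ ≤ (p:ℝ) ^ (-m)) :
    ‖z - (presidue m z : ℚ_[p]) * (p:ℚ_[p]) ^ m‖ ≤ (p:ℝ) ^ (-(m+1)) := by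
  rw [presidue, dif_pos h]
  exact norm_sub_val_mul_zpow m z _ rfl

lemma presidue_unique {m : ℤ} {z : ℚ_[p]} (h : ‖z‖ ≤ (p:ℝ) ^ (-m)) {i : ℕ} (hi : i < p)
    (hspec : ‖z - (i:ℚ_[p]) * (p:ℚ_[p]) ^ m‖ ≤ (p:ℝ) ^ (-(m+1))) : presidue m z = i := by
  set r := presidue m z with hr
  have h1 := presidue_spec h
  have h2 : ‖((r:ℚ_[p]) - (i:ℚ_[p])) * (p:ℚ_[p]) ^ m‖ ≤ (p:ℝ) ^ (-(m+1)) := by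
    have he : ((r:ℚ_[p]) - (i:ℚ_[p])) * (p:ℚ_[p]) ^ m
        = (z - (i:ℚ_[p]) * (p:ℚ_[p]) ^ m) - (z - (r:ℚ_[p]) * (p:ℚ_[p]) ^ m) := by ring
    rw [he]
    exact le_trans (pnorm_sub_le_max _ _) (max_le hspec h1)
  rw [norm_mul, Padic.norm_p_zpow] at h2
  have h3 : ‖(r:ℚ_[p]) - (i:ℚ_[p])‖ ≤ (p:ℝ) ^ (-1:ℤ) := by
    have heq : (p:ℝ) ^ (-(m+1)) = (p:ℝ) ^ (-1:ℤ) * (p:ℝ) ^ (-m) := by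
      rw [← zpow_add₀ (ne_of_gt pR0)]; congr 1; omega
    rw [heq] at h2
    exact le_of_mul_le_mul_right h2 (pzpow_pos (-m))
  have h4 : ‖(((r:ℤ) - (i:ℤ) : ℤ) : ℚ_[p])‖ < 1 := by
    have hc : (((r:ℤ) - (i:ℤ) : ℤ) : ℚ_[p]) = (r:ℚ_[p]) - (i:ℚ_[p]) := by push_cast; ring
    rw [hc]
    calc ‖(r:ℚ_[p]) - (i:ℚ_[p])‖ ≤ (p:ℝ) ^ (-1:ℤ) := h3
      _ < 1 := by
          have := pR1 (p := p)
          rw [zpow_neg, zpow_one]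
          rw [inv_lt_one_iff₀]
          right; exact this
  have h5 : (p:ℤ) ∣ ((r:ℤ) - (i:ℤ)) := Padic.norm_intCast_lt_one_iff.1 h4
  have h6 : ((r:ℤ) - (i:ℤ)) = 0 := by
    apply Int.eq_zero_of_abs_lt_dvd h5
    have hrp := presidue_lt (p := p) m z
    rw [← hr] at hrp
    rw [abs_sub_lt_iff]
    constructor <;> [omega; omega]
  omega

lemma presidue_congr {m : ℤ} {x y : ℚ_[p]} (hx : ‖x‖ ≤ (p:ℝ) ^ (-m))
    (hy : ‖y‖ ≤ (p:ℝ) ^ (-m)) (hxy : ‖x - y‖ ≤ (p:ℝ) ^ (-(m+1))) :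
    presidue m x = presidue m y := by
  apply presidue_unique hx (presidue_lt m y)
  have he : x - (presidue m y : ℚ_[p]) * (p:ℚ_[p]) ^ m
      = (x - y) + (y - (presidue m y : ℚ_[p]) * (p:ℚ_[p]) ^ m) := by ring
  rw [he]
  exact le_trans (Padic.nonarchimedean _ _) (max_le hxy (presidue_spec hy))

private lemma pnorm_natCast_le_one (i : ℕ) : ‖(i : ℚ_[p])‖ ≤ 1 := by
  have := Padic.norm_int_le_one (p := p) (i : ℤ)
  simpa using this

private lemma pnorm_mul_zpow_le (i : ℕ) (m : ℤ) :
    ‖(i:ℚ_[p]) * (p:ℚ_[p]) ^ m‖ ≤ (p:ℝ) ^ (-m) := by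
  rw [norm_mul, Padic.norm_p_zpow]
  calc ‖(i:ℚ_[p])‖ * (p:ℝ) ^ (-m) ≤ 1 * (p:ℝ) ^ (-m) :=
        mul_le_mul_of_nonneg_right (pnorm_natCast_le_one i) (pzpow_pos (-m)).le
    _ = (p:ℝ) ^ (-m) := one_mul _

private lemma pzpow_anti {m n : ℤ} (h : m ≤ n) : (p:ℝ) ^ (-n) ≤ (p:ℝ) ^ (-m) := by
  rw [zpow_le_zpow_iff_right₀ pR1]
  omega

variable [MeasurableSpace ℚ_[p]] [BorelSpace ℚ_[p]]
variable (μ : Measure ℚ_[p]) [μ.IsAddHaarMeasure]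

lemma pball_measurableSet (c : ℚ_[p]) (r : ℝ) :
    MeasurableSet {x : ℚ_[p] | ‖x - c‖ ≤ r} := by
  have : IsClosed {x : ℚ_[p] | ‖x - c‖ ≤ r} :=
    isClosed_le ((continuous_id.sub continuous_const).norm) continuous_const
  exact this.measurableSet

lemma pball_measure (hμ : μ {x : ℚ_[p] | ‖x‖ ≤ 1} = 1) (c : ℚ_[p]) (m : ℤ) :
    μ {x : ℚ_[p] | ‖x - c‖ ≤ (p:ℝ) ^ (-m)} = ENNReal.ofReal ((p:ℝ) ^ (-m)) := by
  have htrans : ∀ (c : ℚ_[p]) (r : ℝ),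
      μ {x : ℚ_[p] | ‖x - c‖ ≤ r} = μ {x : ℚ_[p] | ‖x‖ ≤ r} := by
    intro c r
    have hs : {x : ℚ_[p] | ‖x - c‖ ≤ r} = (fun y => -c + y) ⁻¹' {x : ℚ_[p] | ‖x‖ ≤ r} := by
      ext y
      simp [neg_add_eq_sub]
    rw [hs, measure_preimage_add]
  set g : ℤ → ENNReal := fun m => μ {x : ℚ_[p] | ‖x‖ ≤ (p:ℝ) ^ (-m)} with hg
  have hg0 : g 0 = 1 := by
    have : {x : ℚ_[p] | ‖x‖ ≤ (p:ℝ) ^ (-(0:ℤ))} = {x : ℚ_[p] | ‖x‖ ≤ 1} := by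
      norm_num
    rw [hg]
    simp only [this]
    exact hμ
  have hrec : ∀ m : ℤ, g m = p * g (m+1) := by
    intro m
    have hcover : {x : ℚ_[p] | ‖x‖ ≤ (p:ℝ) ^ (-m)}
        = ⋃ i ∈ Finset.range p,
            {x : ℚ_[p] | ‖x - (i:ℚ_[p]) * (p:ℚ_[p]) ^ m‖ ≤ (p:ℝ) ^ (-(m+1))} := by
      ext z
      simp only [Set.mem_setOf_eq, Set.mem_iUnion, Finset.mem_range, exists_prop]
      constructor
      · intro hz
        exact ⟨presidue m z, presidue_lt m z, presidue_spec hz⟩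
      · rintro ⟨i, hi, hmem⟩
        have h1 : ‖z‖ ≤ max ‖z - (i:ℚ_[p]) * (p:ℚ_[p]) ^ m‖ ‖(i:ℚ_[p]) * (p:ℚ_[p]) ^ m‖ := by
          have := Padic.nonarchimedean (z - (i:ℚ_[p]) * (p:ℚ_[p]) ^ m)
            ((i:ℚ_[p]) * (p:ℚ_[p]) ^ m)
          simpa using this
        exact le_trans h1 (max_le (le_trans hmem (pzpow_anti (by omega)))
          (pnorm_mul_zpow_le i m))
    have hdisj : (↑(Finset.range p) : Set ℕ).PairwiseDisjoint
        (fun i : ℕ => {x : ℚ_[p] | ‖x - (i:ℚ_[p]) * (p:ℚ_[p]) ^ m‖ ≤ (p:ℝ) ^ (-(m+1))}) := by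
      intro i hi i' hi' hne
      simp only [Finset.coe_range, Set.mem_Iio] at hi hi'
      apply Set.disjoint_left.2
      intro z hz hz'
      simp only [Set.mem_setOf_eq] at hz hz'
      have hzle : ‖z‖ ≤ (p:ℝ) ^ (-m) := by
        have h1 : ‖z‖ ≤ max ‖z - (i:ℚ_[p]) * (p:ℚ_[p]) ^ m‖ ‖(i:ℚ_[p]) * (p:ℚ_[p]) ^ m‖ := by
          have := Padic.nonarchimedean (z - (i:ℚ_[p]) * (p:ℚ_[p]) ^ m)
            ((i:ℚ_[p]) * (p:ℚ_[p]) ^ m)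
          simpa using this
        exact le_trans h1 (max_le (le_trans hz (pzpow_anti (by omega)))
          (pnorm_mul_zpow_le i m))
      exact hne ((presidue_unique hzle hi hz).symm.trans (presidue_unique hzle hi' hz'))
    have hmeas : ∀ b ∈ Finset.range p, MeasurableSet
        {x : ℚ_[p] | ‖x - (b:ℚ_[p]) * (p:ℚ_[p]) ^ m‖ ≤ (p:ℝ) ^ (-(m+1))} :=
      fun b _ => pball_measurableSet _ _
    rw [hg]
    simp only
    rw [hcover, measure_biUnion_finset hdisj hmeas]
    have heach : ∀ i ∈ Finset.range p,
        μ {x : ℚ_[p] | ‖x - (i:ℚ_[p]) * (p:ℚ_[p]) ^ m‖ ≤ (p:ℝ) ^ (-(m+1))}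
          = g (m+1) := by
      intro i _
      rw [htrans]
    rw [Finset.sum_congr rfl heach, Finset.sum_const, Finset.card_range, nsmul_eq_mul]
  have hp0' : (p : ENNReal) ≠ 0 := by
    exact_mod_cast hp.out.ne_zero
  have hptop : (p : ENNReal) ≠ ⊤ := ENNReal.natCast_ne_top p
  have hofp : (p : ENNReal) = ENNReal.ofReal (p:ℝ) := by
    rw [ENNReal.ofReal_natCast]
  have hmulstep : ∀ m : ℤ, ENNReal.ofReal ((p:ℝ) ^ (-m))
      = (p : ENNReal) * ENNReal.ofReal ((p:ℝ) ^ (-(m+1))) := by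
    intro m
    rw [hofp, ← ENNReal.ofReal_mul pR0.le]
    congr 1
    rw [show (-m : ℤ) = -(m+1)+1 by ring, zpow_add_one₀ (ne_of_gt pR0)]
    ring
  have main : ∀ m : ℤ, g m = ENNReal.ofReal ((p:ℝ) ^ (-m)) := by
    intro m
    induction m using Int.induction_on with
    | zero => rw [hg0]; norm_num
    | succ n ih =>
        have h1 := hrec n
        rw [ih, hmulstep n] at h1
        exact (ENNReal.mul_right_inj hp0' hptop).1 h1.symm
    | pred n ih =>
        have h1 := hrec (-(n:ℤ) - 1)
        have h2 : (-(n:ℤ) - 1) + 1 = -(n:ℤ) := by ring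
        rw [h2, ih] at h1
        have h3 := hmulstep (-(n:ℤ) - 1)
        rw [h2] at h3
        rw [← h3] at h1
        exact h1
  rw [htrans]
  exact main m

lemma pball_measure_ne_top (hμ : μ {x : ℚ_[p] | ‖x‖ ≤ 1} = 1) (c : ℚ_[p]) (m : ℤ) :
    μ {x : ℚ_[p] | ‖x - c‖ ≤ (p:ℝ) ^ (-m)} ≠ ⊤ := by
  rw [pball_measure μ hμ]
  exact ENNReal.ofReal_ne_top

lemma pball_measure_toReal (hμ : μ {x : ℚ_[p] | ‖x‖ ≤ 1} = 1) (c : ℚ_[p]) (m : ℤ) :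
    (μ {x : ℚ_[p] | ‖x - c‖ ≤ (p:ℝ) ^ (-m)}).toReal = (p:ℝ) ^ (-m) := by
  rw [pball_measure μ hμ, ENNReal.toReal_ofReal (pzpow_pos (-m)).le]

private lemma subball_subset (b : ℚ_[p]) (d : ℤ) (i : ℕ) :
    {y : ℚ_[p] | ‖y - (b + (i:ℚ_[p]) * (p:ℚ_[p]) ^ d)‖ ≤ (p:ℝ) ^ (-(d+1))}
      ⊆ {y : ℚ_[p] | ‖y - b‖ ≤ (p:ℝ) ^ (-d)} := by
  intro y hy
  simp only [Set.mem_setOf_eq] at hy ⊢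
  refine le_trans (pnorm_ultra y b (b + (i:ℚ_[p]) * (p:ℚ_[p]) ^ d))
    (max_le (le_trans hy (pzpow_anti (by omega))) ?_)
  rw [show b + (i:ℚ_[p]) * (p:ℚ_[p]) ^ d - b = (i:ℚ_[p]) * (p:ℚ_[p]) ^ d by ring]
  exact pnorm_mul_zpow_le i d

lemma wavelet_sum_repr (b : ℚ_[p]) (d : ℤ) (ζ : ℂ) (j : ℕ) (x : ℚ_[p]) :
    kozyrevWavelet p b d ζ j x
      = ∑ i ∈ Finset.range p, Set.indicator
          {y : ℚ_[p] | ‖y - (b + (i:ℚ_[p]) * (p:ℚ_[p]) ^ d)‖ ≤ (p:ℝ) ^ (-(d+1))}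
          (fun _ => ζ ^ (j * i)) x := by
  by_cases hx : ‖x - b‖ ≤ (p:ℝ) ^ (-d)
  · rw [kozyrevWavelet_apply b d ζ j hx]
    rw [Finset.sum_eq_single_of_mem (presidue d (x - b))
      (Finset.mem_range.2 (presidue_lt d (x - b)))]
    · have hmem : x ∈ {y : ℚ_[p] |
          ‖y - (b + (presidue d (x - b) : ℚ_[p]) * (p:ℚ_[p]) ^ d)‖ ≤ (p:ℝ) ^ (-(d+1))} := by
        simp only [Set.mem_setOf_eq]
        rw [show x - (b + (presidue d (x - b) : ℚ_[p]) * (p:ℚ_[p]) ^ d)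
            = (x - b) - (presidue d (x - b) : ℚ_[p]) * (p:ℚ_[p]) ^ d by ring]
        exact presidue_spec hx
      rw [Set.indicator_of_mem hmem]
    · intro i hi hne
      apply Set.indicator_of_notMem
      intro hmem
      simp only [Set.mem_setOf_eq] at hmem
      rw [show x - (b + (i:ℚ_[p]) * (p:ℚ_[p]) ^ d)
          = (x - b) - (i:ℚ_[p]) * (p:ℚ_[p]) ^ d by ring] at hmem
      exact hne (presidue_unique hx (Finset.mem_range.1 hi) hmem).symm
  · rw [kozyrevWavelet, dif_neg hx]
    symm
    apply Finset.sum_eq_zero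
    intro i _
    apply Set.indicator_of_notMem
    intro hmem
    exact hx (subball_subset b d i hmem)

lemma wavelet_locally_const (b : ℚ_[p]) (d : ℤ) (ζ : ℂ) (j : ℕ) {x y : ℚ_[p]}
    (hx : ‖x - b‖ ≤ (p:ℝ) ^ (-d)) (hy : ‖y - b‖ ≤ (p:ℝ) ^ (-d))
    (hxy : ‖x - y‖ ≤ (p:ℝ) ^ (-(d+1))) :
    kozyrevWavelet p b d ζ j x = kozyrevWavelet p b d ζ j y := by
  rw [kozyrevWavelet_apply b d ζ j hx, kozyrevWavelet_apply b d ζ j hy]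
  have : presidue d (x - b) = presidue d (y - b) :=
    presidue_congr hx hy (by rw [show (x - b) - (y - b) = x - y by ring]; exact hxy)
  rw [this]

lemma wavelet_measurable (b : ℚ_[p]) (d : ℤ) (ζ : ℂ) (j : ℕ) :
    Measurable (kozyrevWavelet p b d ζ j) := by
  rw [funext (wavelet_sum_repr b d ζ j)]
  apply Finset.measurable_sum
  intro i _
  exact measurable_const.indicator (pball_measurableSet _ _)

lemma wavelet_integrable (hμ : μ {x : ℚ_[p] | ‖x‖ ≤ 1} = 1) (b : ℚ_[p]) (d : ℤ)
    (ζ : ℂ) (j : ℕ) : Integrable (kozyrevWavelet p b d ζ j) μ := by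
  rw [funext (wavelet_sum_repr b d ζ j)]
  apply integrable_finset_sum
  intro i _
  rw [integrable_indicator_iff (pball_measurableSet _ _)]
  refine integrableOn_const ?_
  rw [pball_measure μ hμ]
  exact ENNReal.ofReal_ne_top

lemma wavelet_setIntegral_const (hμ : μ {x : ℚ_[p] | ‖x‖ ≤ 1} = 1) (b : ℚ_[p]) (d : ℤ)
    (ζ : ℂ) (j : ℕ) {x : ℚ_[p]} (hx : ‖x - b‖ ≤ (p:ℝ) ^ (-d)) :
    ∫ y in {y : ℚ_[p] | ‖y - x‖ ≤ (p:ℝ) ^ (-(d+1))}, kozyrevWavelet p b d ζ j y ∂μ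
      = ((p:ℝ) ^ (-(d+1))) • kozyrevWavelet p b d ζ j x := by
  have heq : Set.EqOn (kozyrevWavelet p b d ζ j) (fun _ => kozyrevWavelet p b d ζ j x)
      {y : ℚ_[p] | ‖y - x‖ ≤ (p:ℝ) ^ (-(d+1))} := by
    intro y hy
    simp only [Set.mem_setOf_eq] at hy
    have hyB : ‖y - b‖ ≤ (p:ℝ) ^ (-d) := by
      refine le_trans (pnorm_ultra y b x) (max_le ?_ hx)
      exact le_trans hy (pzpow_anti (by omega))
    exact wavelet_locally_const b d ζ j hyB hx (by
      rw [show y - x = y - x by ring]; exact hy)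
  rw [setIntegral_congr_fun (pball_measurableSet _ _) heq, setIntegral_const,
    measureReal_def, pball_measure_toReal μ hμ]

lemma wavelet_integral_ball (hμ : μ {x : ℚ_[p] | ‖x‖ ≤ 1} = 1) (b : ℚ_[p]) (d : ℤ)
    (ζ : ℂ) (hζ : IsPrimitiveRoot ζ p) (j : ℕ) (hj1 : 1 ≤ j) (hj2 : j ≤ p - 1) :
    ∫ y in {y : ℚ_[p] | ‖y - b‖ ≤ (p:ℝ) ^ (-d)}, kozyrevWavelet p b d ζ j y ∂μ = 0 := by
  rw [funext (wavelet_sum_repr b d ζ j)]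
  rw [integral_finset_sum _ (fun i _ => Integrable.integrableOn (by
    rw [integrable_indicator_iff (pball_measurableSet _ _)]
    refine integrableOn_const ?_
    rw [pball_measure μ hμ]
    exact ENNReal.ofReal_ne_top))]
  have heach : ∀ i ∈ Finset.range p,
      (∫ y in {y : ℚ_[p] | ‖y - b‖ ≤ (p:ℝ) ^ (-d)}, Set.indicator
        {y : ℚ_[p] | ‖y - (b + (i:ℚ_[p]) * (p:ℚ_[p]) ^ d)‖ ≤ (p:ℝ) ^ (-(d+1))}
        (fun _ => ζ ^ (j * i)) y ∂μ)
      = ((p:ℝ) ^ (-(d+1))) • (ζ ^ j) ^ i := by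
    intro i _
    rw [setIntegral_indicator (pball_measurableSet _ _),
      Set.inter_eq_self_of_subset_right (subball_subset b d i),
      setIntegral_const, measureReal_def, pball_measure_toReal μ hμ, ← pow_mul]
  rw [Finset.sum_congr rfl heach, ← Finset.smul_sum]
  have hp2 := hp.out.two_le
  have hcop : Nat.Coprime j p := by
    apply Nat.coprime_comm.1
    apply (Nat.Prime.coprime_iff_not_dvd hp.out).2
    intro hdvd
    have := Nat.le_of_dvd (by omega) hdvd
    omega
  have hprim : IsPrimitiveRoot (ζ ^ j) p := hζ.pow_of_coprime j hcop
  rw [hprim.geom_sum_eq_zero hp.out.one_lt, smul_zero]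

lemma integrableOn_annulus (hμ : μ {x : ℚ_[p] | ‖x‖ ≤ 1} = 1) (c : ℚ_[p]) (s t : ℤ)
    (α : ℝ) :
    IntegrableOn (fun y : ℚ_[p] => ‖y - c‖ ^ (-α))
      ({y : ℚ_[p] | ‖y - c‖ ≤ (p:ℝ) ^ (-s)} \ {y : ℚ_[p] | ‖y - c‖ ≤ (p:ℝ) ^ (-t)}) μ := by
  have hD : {y : ℚ_[p] | ‖y - c‖ ≤ (p:ℝ) ^ (-s)} \ {y : ℚ_[p] | ‖y - c‖ ≤ (p:ℝ) ^ (-t)}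
      = ⋃ r ∈ Finset.Ico s t, ({y : ℚ_[p] | ‖y - c‖ ≤ (p:ℝ) ^ (-r)}
          \ {y : ℚ_[p] | ‖y - c‖ ≤ (p:ℝ) ^ (-(r+1))}) := by
    ext y
    simp only [Set.mem_diff, Set.mem_setOf_eq, Set.mem_iUnion, Finset.mem_Ico, exists_prop]
    constructor
    · rintro ⟨h1, h2⟩
      have hy0 : y - c ≠ 0 := by
        intro h0
        exact h2 (by rw [h0, norm_zero]; exact (pzpow_pos (-t)).le)
      have hnorm : ‖y - c‖ = (p:ℝ) ^ (-(y - c).valuation) := Padic.norm_eq_zpow_neg_valuation hy0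
      refine ⟨(y - c).valuation, ⟨?_, ?_⟩, ?_, ?_⟩
      · rw [hnorm, zpow_le_zpow_iff_right₀ pR1] at h1
        omega
      · by_contra hge
        push_neg at hge
        exact h2 (by rw [hnorm]; exact pzpow_anti (by omega))
      · rw [hnorm]
      · rw [hnorm]
        intro hc2
        rw [zpow_le_zpow_iff_right₀ pR1] at hc2
        omega
    · rintro ⟨r, ⟨hsr, hrt⟩, h1, h2⟩
      exact ⟨le_trans h1 (pzpow_anti (by omega)),
        fun hc2 => h2 (le_trans hc2 (pzpow_anti (by omega)))⟩
  rw [hD, integrableOn_finset_iUnion]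
  intro r hr
  apply IntegrableOn.congr_fun (f := fun _ : ℚ_[p] => (((p:ℝ) ^ (-r)) ^ (-α) : ℝ))
  · refine integrableOn_const ?_
    refine ne_top_of_le_ne_top ?_ (measure_mono Set.diff_subset)
    rw [pball_measure μ hμ]
    exact ENNReal.ofReal_ne_top
  · intro y hy
    simp only [Set.mem_diff, Set.mem_setOf_eq] at hy
    simp only
    rw [pnorm_exact hy.1 hy.2]
  · exact (pball_measurableSet _ _).diff (pball_measurableSet _ _)

lemma vertexOf_eq {V : Type*} [Nonempty V] {U : V → Set ℚ_[p]}
    (hdisj : Pairwise (Function.onFun Disjoint U)) {x : ℚ_[p]} {w : V} (hx : x ∈ U w) :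
    vertexOf U x = w := by
  rw [vertexOf]
  have hex : ∃ v, x ∈ U v := ⟨w, hx⟩
  rw [dif_pos hex]
  by_contra hne
  exact Set.disjoint_left.1 (hdisj hne) hex.choose_spec hx

end Aux

private lemma rpow_calc {p : ℕ} [hp : Fact p.Prime] (d : ℤ) (α : ℝ) :
    (((p:ℝ) ^ (-d)) ^ (-α)) * (p:ℝ) ^ (-d) = (p:ℝ) ^ ((d:ℝ) * (α - 1)) := by
  have h1 : ((p:ℝ) ^ (-d) : ℝ) = (p:ℝ) ^ ((-d : ℤ) : ℝ) := (Real.rpow_intCast _ _).symm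
  rw [h1, ← Real.rpow_mul (pR0 (p := p)).le, ← Real.rpow_add (pR0 (p := p))]
  congr 1
  push_cast
  ring

/-- **Kozyrev-wavelet part of the spectral theorem for the p-adic graph Laplacian
`H_•` on `L²(Z, dx)`**: every Kozyrev wavelet supported in a ball `B ⊆ U_v` is an
eigenfunction of `H` with eigenvalue
`λ_B = −p^{d(α−1)} − ∫_{U_v∖B} |y − b|_p^{−α} dμ(y) − ∑_{w ≠ v} K(v,w)·μ(U_w)`. -/
theorem kozyrev_eigenfunction_graphLaplacian (p : ℕ) [Fact p.Prime]
    [MeasurableSpace ℚ_[p]] [BorelSpace ℚ_[p]]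
    (μ : Measure ℚ_[p]) [μ.IsAddHaarMeasure]
    (hμ : μ {x : ℚ_[p] | ‖x‖ ≤ 1} = 1)
    {V : Type*} [Fintype V] [Nonempty V] [DecidableEq V]
    (U : V → Set ℚ_[p]) (bc : V → ℚ_[p]) (rad : V → ℤ)
    (hU : ∀ v, U v = {x : ℚ_[p] | ‖x - bc v‖ ≤ (p : ℝ) ^ (-(rad v))})
    (hdisj : Pairwise (Function.onFun Disjoint U))
    (α : ℝ) (K : V → V → ℝ)
    (hK_nonneg : ∀ v w, 0 ≤ K v w) (hK_symm : ∀ v w, K v w = K w v)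
    (hK_diag : ∀ v, K v v = 0)
    (v : V) (b : ℚ_[p]) (d : ℤ) (hd : rad v ≤ d)
    (hB : {x : ℚ_[p] | ‖x - b‖ ≤ (p : ℝ) ^ (-d)} ⊆ U v)
    (ζ : ℂ) (hζ : IsPrimitiveRoot ζ p)
    (j : ℕ) (hj1 : 1 ≤ j) (hj2 : j ≤ p - 1) :
    ∀ x ∈ ⋃ w, U w,
      graphLaplacian μ U α K (kozyrevWavelet p b d ζ j) x
        = (-((p : ℝ) ^ ((d : ℝ) * (α - 1)))
            - (∫ y in U v \ {y : ℚ_[p] | ‖y - b‖ ≤ (p : ℝ) ^ (-d)}, ‖y - b‖ ^ (-α) ∂μ)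
            - ∑ w ∈ Finset.univ.erase v, K v w * (μ (U w)).toReal)
          • kozyrevWavelet p b d ζ j x := by
  intro x hx
  classical
  obtain ⟨w₀, hxw⟩ : ∃ w, x ∈ U w := by simpa using hx
  have hmeasB : MeasurableSet {y : ℚ_[p] | ‖y - b‖ ≤ (p : ℝ) ^ (-d)} :=
    pball_measurableSet _ _
  have hmeasU : ∀ w, MeasurableSet (U w) := fun w => by
    rw [hU w]; exact pball_measurableSet _ _
  have hμUfin : ∀ w, μ (U w) < ⊤ := fun w => by
    rw [hU w, pball_measure μ hμ]; exact ENNReal.ofReal_lt_top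
  have hbB : b ∈ {y : ℚ_[p] | ‖y - b‖ ≤ (p : ℝ) ^ (-d)} := by
    simp only [Set.mem_setOf_eq, sub_self, norm_zero]
    exact (pzpow_pos (p := p) (-d)).le
  have hbv : b ∈ U v := hB hbB
  have hyUvB : ∀ y ∈ U v, ‖y - b‖ ≤ (p:ℝ) ^ (-(rad v)) := by
    intro y hy
    rw [hU v] at hy hbv
    refine le_trans (pnorm_ultra y b (bc v)) (max_le hy ?_)
    rw [norm_sub_rev]
    exact hbv
  have hψ0 : ∀ y : ℚ_[p], y ∉ {y : ℚ_[p] | ‖y - b‖ ≤ (p : ℝ) ^ (-d)} →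
      kozyrevWavelet p b d ζ j y = 0 := fun y hy =>
    kozyrevWavelet_eq_zero b d ζ j (by simpa using hy)
  have hψUw : ∀ w, w ≠ v → ∀ y ∈ U w, kozyrevWavelet p b d ζ j y = 0 := by
    intro w hw y hy
    exact hψ0 y (fun hyB => Set.disjoint_left.1 (hdisj hw) hy (hB hyB))
  have hkerUw : ∀ w, x ∈ U w → ∀ w', ∀ y ∈ U w',
      graphKernel U α K x y = if w = w' then ‖x - y‖ ^ (-α) else K w w' := by
    intro w hxw' w' y hy
    rw [graphKernel, vertexOf_eq hdisj hxw', vertexOf_eq hdisj hy]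
  have hZ : (⋃ w, U w) = ⋃ w ∈ Finset.univ, U w := by simp
  have hpair : (↑(Finset.univ : Finset V) : Set V).Pairwise (Function.onFun Disjoint U) := by
    intro a _ c _ hac
    exact hdisj hac
  by_cases hxB : x ∈ {y : ℚ_[p] | ‖y - b‖ ≤ (p : ℝ) ^ (-d)}
  · -- CASE A : x in the wavelet ball B
    have hxUv : x ∈ U v := hB hxB
    have hxBn : ‖x - b‖ ≤ (p:ℝ) ^ (-d) := hxB
    have hmeasS : MeasurableSet {y : ℚ_[p] | ‖y - x‖ ≤ (p : ℝ) ^ (-(d+1))} :=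
      pball_measurableSet _ _
    have hSsubB : {y : ℚ_[p] | ‖y - x‖ ≤ (p : ℝ) ^ (-(d+1))}
        ⊆ {y : ℚ_[p] | ‖y - b‖ ≤ (p : ℝ) ^ (-d)} := by
      intro y hy
      simp only [Set.mem_setOf_eq] at hy ⊢
      exact le_trans (pnorm_ultra y b x) (max_le (le_trans hy (pzpow_anti (by omega))) hxBn)
    -- EqOn facts
    have hFeqW : ∀ w : V, w ≠ v → Set.EqOn
        (fun _ : ℚ_[p] => K v w • ((0:ℂ) - kozyrevWavelet p b d ζ j x))
        (fun y => graphKernel U α K x y • (kozyrevWavelet p b d ζ j y - kozyrevWavelet p b d ζ j x))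
        (U w) := by
      intro w hw y hy
      simp only
      rw [hkerUw v hxUv w y hy, if_neg (fun hvw => hw hvw.symm), hψUw w hw y hy]
    have hFeqOut : Set.EqOn
        (fun y : ℚ_[p] => (‖y - b‖ ^ (-α)) • (-kozyrevWavelet p b d ζ j x))
        (fun y => graphKernel U α K x y • (kozyrevWavelet p b d ζ j y - kozyrevWavelet p b d ζ j x))
        (U v \ {y : ℚ_[p] | ‖y - b‖ ≤ (p : ℝ) ^ (-d)}) := by
      intro y hy
      simp only
      have hyout : ¬ ‖y - b‖ ≤ (p:ℝ) ^ (-d) := by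
        have := hy.2
        simpa using this
      have hnorm : ‖x - y‖ = ‖y - b‖ := by
        have hlt : ‖x - b‖ < ‖b - y‖ := by
          rw [norm_sub_rev b y]
          exact lt_of_le_of_lt hxBn (not_le.1 hyout)
        rw [show x - y = (b - y) + (x - b) by ring, pnorm_dominant hlt, norm_sub_rev]
      rw [hkerUw v hxUv v y hy.1, if_pos rfl, hψ0 y hy.2, hnorm, zero_sub]
    have hFeqAnn : Set.EqOn
        (fun y : ℚ_[p] => (((p:ℝ) ^ (-d)) ^ (-α)) •
          (kozyrevWavelet p b d ζ j y - kozyrevWavelet p b d ζ j x))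
        (fun y => graphKernel U α K x y • (kozyrevWavelet p b d ζ j y - kozyrevWavelet p b d ζ j x))
        ({y : ℚ_[p] | ‖y - b‖ ≤ (p : ℝ) ^ (-d)} \ {y : ℚ_[p] | ‖y - x‖ ≤ (p : ℝ) ^ (-(d+1))}) := by
      intro y hy
      simp only
      have h1 : ‖x - y‖ ≤ (p:ℝ) ^ (-d) := by
        refine le_trans (pnorm_ultra x y b) (max_le hxBn ?_)
        rw [norm_sub_rev]
        exact hy.1
      have h2 : ¬ ‖x - y‖ ≤ (p:ℝ) ^ (-(d+1)) := by
        rw [norm_sub_rev]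
        have := hy.2
        simpa using this
      rw [hkerUw v hxUv v y (hB hy.1), if_pos rfl, pnorm_exact h1 h2]
    have hFeqS : Set.EqOn
        (fun _ : ℚ_[p] => (0:ℂ))
        (fun y => graphKernel U α K x y • (kozyrevWavelet p b d ζ j y - kozyrevWavelet p b d ζ j x))
        {y : ℚ_[p] | ‖y - x‖ ≤ (p : ℝ) ^ (-(d+1))} := by
      intro y hy
      simp only
      have hyB := hSsubB hy
      have hsame : kozyrevWavelet p b d ζ j y = kozyrevWavelet p b d ζ j x :=
        wavelet_locally_const b d ζ j hyB hxBn hy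
      rw [hsame, sub_self, smul_zero]
    -- Integrability
    have hintW : ∀ w : V, w ≠ v → IntegrableOn
        (fun y => graphKernel U α K x y • (kozyrevWavelet p b d ζ j y - kozyrevWavelet p b d ζ j x))
        (U w) μ := by
      intro w hw
      exact (integrableOn_const (hμUfin w).ne).congr_fun (hFeqW w hw) (hmeasU w)
    have hintB : IntegrableOn
        (fun y => graphKernel U α K x y • (kozyrevWavelet p b d ζ j y - kozyrevWavelet p b d ζ j x))
        {y : ℚ_[p] | ‖y - b‖ ≤ (p : ℝ) ^ (-d)} μ := by
      have hinner : IntegrableOn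
          (fun y => (((p:ℝ) ^ (-d)) ^ (-α)) •
            (kozyrevWavelet p b d ζ j y - kozyrevWavelet p b d ζ j x))
          {y : ℚ_[p] | ‖y - b‖ ≤ (p : ℝ) ^ (-d)} μ := by
        refine Integrable.smul (((p:ℝ) ^ (-d)) ^ (-α))
          (f := fun y => kozyrevWavelet p b d ζ j y - kozyrevWavelet p b d ζ j x) (μ := μ.restrict _) ?_
        apply Integrable.sub ((wavelet_integrable μ hμ b d ζ j).integrableOn)
        refine integrableOn_const ?_
        rw [pball_measure μ hμ]
        exact ENNReal.ofReal_ne_top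
      have hind : IntegrableOn
          (Set.indicator {y : ℚ_[p] | ‖y - x‖ ≤ (p : ℝ) ^ (-(d+1))}ᶜ
            (fun y => (((p:ℝ) ^ (-d)) ^ (-α)) •
              (kozyrevWavelet p b d ζ j y - kozyrevWavelet p b d ζ j x)))
          {y : ℚ_[p] | ‖y - b‖ ≤ (p : ℝ) ^ (-d)} μ :=
        hinner.indicator hmeasS.compl
      apply hind.congr_fun _ hmeasB
      intro y hyB
      by_cases hyS : y ∈ {y : ℚ_[p] | ‖y - x‖ ≤ (p : ℝ) ^ (-(d+1))}
      · rw [Set.indicator_of_notMem (by simpa using hyS)]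
        exact (hFeqS hyS).symm ▸ (hFeqS hyS)
      · rw [Set.indicator_of_mem (by simpa using hyS)]
        exact hFeqAnn ⟨hyB, hyS⟩
    have hintOut : IntegrableOn
        (fun y => graphKernel U α K x y • (kozyrevWavelet p b d ζ j y - kozyrevWavelet p b d ζ j x))
        (U v \ {y : ℚ_[p] | ‖y - b‖ ≤ (p : ℝ) ^ (-d)}) μ := by
      have hbig : IntegrableOn (fun y : ℚ_[p] => ‖y - b‖ ^ (-α))
          (U v \ {y : ℚ_[p] | ‖y - b‖ ≤ (p : ℝ) ^ (-d)}) μ := by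
        have base := integrableOn_annulus μ hμ b (rad v) d α
        apply base.mono_set
        intro y hy
        exact ⟨hyUvB y hy.1, hy.2⟩
      exact IntegrableOn.congr_fun (hbig.smul_const (-kozyrevWavelet p b d ζ j x)) hFeqOut
        ((hmeasU v).diff hmeasB)
    have hintV : IntegrableOn
        (fun y => graphKernel U α K x y • (kozyrevWavelet p b d ζ j y - kozyrevWavelet p b d ζ j x))
        (U v) μ := by
      rw [← Set.union_diff_cancel hB]
      exact hintB.union hintOut
    -- Decompose the integral
    rw [graphLaplacian, hZ, integral_biUnion_finset Finset.univ (fun w _ => hmeasU w) hpair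
      (fun w _ => by
        by_cases hw : w = v
        · subst hw; exact hintV
        · exact hintW w hw)]
    rw [← Finset.add_sum_erase Finset.univ _ (Finset.mem_univ v)]
    -- the terms for w ≠ v
    have herase : ∀ w ∈ Finset.univ.erase v,
        (∫ y in U w, graphKernel U α K x y •
          (kozyrevWavelet p b d ζ j y - kozyrevWavelet p b d ζ j x) ∂μ)
        = (-(K v w * (μ (U w)).toReal)) • kozyrevWavelet p b d ζ j x := by
      intro w hw
      have hwv : w ≠ v := Finset.ne_of_mem_erase hw
      rw [← setIntegral_congr_fun (hmeasU w) (hFeqW w hwv), setIntegral_const, measureReal_def]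
      rw [zero_sub, smul_neg, smul_neg, smul_smul, ← neg_smul, mul_comm]
    rw [Finset.sum_congr rfl herase]
    -- the U v term
    rw [← integral_inter_add_diff hmeasB hintV,
      Set.inter_eq_self_of_subset_right hB]
    -- ∫ over U v \ B
    rw [← setIntegral_congr_fun ((hmeasU v).diff hmeasB) hFeqOut,
      integral_smul_const]
    -- ∫ over B : split along S
    rw [← integral_inter_add_diff hmeasS hintB,
      Set.inter_eq_self_of_subset_right hSsubB]
    rw [← setIntegral_congr_fun hmeasS hFeqS, integral_zero, zero_add]
    rw [← setIntegral_congr_fun (hmeasB.diff hmeasS) hFeqAnn, integral_smul]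
    have hψint : IntegrableOn (kozyrevWavelet p b d ζ j)
        ({y : ℚ_[p] | ‖y - b‖ ≤ (p : ℝ) ^ (-d)} \
          {y : ℚ_[p] | ‖y - x‖ ≤ (p : ℝ) ^ (-(d+1))}) μ :=
      (wavelet_integrable μ hμ b d ζ j).integrableOn
    have hconstint : IntegrableOn (fun _ : ℚ_[p] => kozyrevWavelet p b d ζ j x)
        ({y : ℚ_[p] | ‖y - b‖ ≤ (p : ℝ) ^ (-d)} \
          {y : ℚ_[p] | ‖y - x‖ ≤ (p : ℝ) ^ (-(d+1))}) μ := by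
      refine integrableOn_const ?_
      refine ne_top_of_le_ne_top ?_ (measure_mono Set.diff_subset)
      rw [pball_measure μ hμ]
      exact ENNReal.ofReal_ne_top
    rw [integral_sub hψint hconstint, setIntegral_const, measureReal_def]
    -- value of ∫ ψ on B \ S
    have hψBS : (∫ y in {y : ℚ_[p] | ‖y - b‖ ≤ (p : ℝ) ^ (-d)} \
        {y : ℚ_[p] | ‖y - x‖ ≤ (p : ℝ) ^ (-(d+1))}, kozyrevWavelet p b d ζ j y ∂μ)
        = -(((p:ℝ) ^ (-(d+1))) • kozyrevWavelet p b d ζ j x) := by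
      have h1 := integral_inter_add_diff (μ := μ)
        (s := {y : ℚ_[p] | ‖y - b‖ ≤ (p : ℝ) ^ (-d)})
        (t := {y : ℚ_[p] | ‖y - x‖ ≤ (p : ℝ) ^ (-(d+1))}) hmeasS
        ((wavelet_integrable μ hμ b d ζ j).integrableOn)
      rw [Set.inter_eq_self_of_subset_right hSsubB,
        wavelet_integral_ball μ hμ b d ζ hζ j hj1 hj2,
        wavelet_setIntegral_const μ hμ b d ζ j hxBn] at h1
      rw [add_comm] at h1
      exact eq_neg_of_add_eq_zero_left h1
    rw [hψBS]
    -- measure of B \ S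
    have hμBS : (μ ({y : ℚ_[p] | ‖y - b‖ ≤ (p : ℝ) ^ (-d)} \
        {y : ℚ_[p] | ‖y - x‖ ≤ (p : ℝ) ^ (-(d+1))})).toReal
        = (p:ℝ) ^ (-d) - (p:ℝ) ^ (-(d+1)) := by
      have h2 := measure_inter_add_diff (μ := μ)
        (s := {y : ℚ_[p] | ‖y - b‖ ≤ (p : ℝ) ^ (-d)})
        (t := {y : ℚ_[p] | ‖y - x‖ ≤ (p : ℝ) ^ (-(d+1))}) hmeasS
      rw [Set.inter_eq_self_of_subset_right hSsubB, pball_measure μ hμ x (d+1),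
        pball_measure μ hμ b d] at h2
      have hfin : μ ({y : ℚ_[p] | ‖y - b‖ ≤ (p : ℝ) ^ (-d)} \
          {y : ℚ_[p] | ‖y - x‖ ≤ (p : ℝ) ^ (-(d+1))}) ≠ ⊤ := by
        apply ne_top_of_le_ne_top (b := ENNReal.ofReal ((p:ℝ) ^ (-d)))
          ENNReal.ofReal_ne_top
        rw [← pball_measure μ hμ b d]
        exact measure_mono Set.diff_subset
      have h3 := congrArg ENNReal.toReal h2
      rw [ENNReal.toReal_add ENNReal.ofReal_ne_top hfin,
        ENNReal.toReal_ofReal (pzpow_pos (p := p) (-(d+1))).le,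
        ENNReal.toReal_ofReal (pzpow_pos (p := p) (-d)).le] at h3
      linarith
    rw [hμBS]
    -- final algebra
    have hPP : (((p:ℝ) ^ (-d)) ^ (-α)) * ((p:ℝ) ^ (-d)) = (p:ℝ) ^ ((d:ℝ) * (α - 1)) :=
      rpow_calc d α
    rw [← Finset.sum_smul]
    have hout : (∫ y in U v \ {y : ℚ_[p] | ‖y - b‖ ≤ (p : ℝ) ^ (-d)}, ‖y - b‖ ^ (-α) ∂μ) •
        (-kozyrevWavelet p b d ζ j x)
        = (-(∫ y in U v \ {y : ℚ_[p] | ‖y - b‖ ≤ (p : ℝ) ^ (-d)}, ‖y - b‖ ^ (-α) ∂μ)) •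
          kozyrevWavelet p b d ζ j x := by
      rw [neg_smul, smul_neg]
    rw [hout]
    have hmain : (((p:ℝ) ^ (-d)) ^ (-α)) •
        (-(((p:ℝ) ^ (-(d+1))) • kozyrevWavelet p b d ζ j x)
          - ((p:ℝ) ^ (-d) - (p:ℝ) ^ (-(d+1))) • kozyrevWavelet p b d ζ j x)
        = (-((p:ℝ) ^ ((d:ℝ) * (α - 1)))) • kozyrevWavelet p b d ζ j x := by
      rw [← neg_smul, ← sub_smul, smul_smul, ← hPP]
      congr 1
      ring
    rw [hmain, ← add_smul, ← add_smul]
    congr 1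
    rw [Finset.sum_neg_distrib]
    ring
  · -- CASE B/C : x outside the wavelet ball B
    have hψx : kozyrevWavelet p b d ζ j x = 0 := hψ0 x hxB
    rw [hψx, smul_zero]
    -- kernel is constant on B
    have hconst : ∃ c : ℝ, ∀ y ∈ {y : ℚ_[p] | ‖y - b‖ ≤ (p : ℝ) ^ (-d)},
        graphKernel U α K x y = c := by
      by_cases hxv : w₀ = v
      · subst hxv
        refine ⟨‖x - b‖ ^ (-α), ?_⟩
        intro y hyB
        rw [hkerUw w₀ hxw w₀ y (hB hyB), if_pos rfl]
        congr 1
        have hxout : ¬ ‖x - b‖ ≤ (p:ℝ) ^ (-d) := by simpa using hxB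
        have hlt : ‖b - y‖ < ‖x - b‖ := by
          rw [norm_sub_rev b y]
          exact lt_of_le_of_lt hyB (not_le.1 hxout)
        rw [show x - y = (x - b) + (b - y) by ring, pnorm_dominant hlt]
      · exact ⟨K w₀ v, fun y hyB => by
          rw [hkerUw w₀ hxw v y (hB hyB), if_neg hxv]⟩
    obtain ⟨c, hc⟩ := hconst
    have hFzeroW : ∀ w : V, w ≠ v → Set.EqOn
        (fun _ : ℚ_[p] => (0:ℂ))
        (fun y => graphKernel U α K x y • (kozyrevWavelet p b d ζ j y - kozyrevWavelet p b d ζ j x))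
        (U w) := by
      intro w hw y hy
      simp only
      rw [hψUw w hw y hy, hψx, sub_zero, smul_zero]
    have hFzeroOut : Set.EqOn
        (fun _ : ℚ_[p] => (0:ℂ))
        (fun y => graphKernel U α K x y • (kozyrevWavelet p b d ζ j y - kozyrevWavelet p b d ζ j x))
        (U v \ {y : ℚ_[p] | ‖y - b‖ ≤ (p : ℝ) ^ (-d)}) := by
      intro y hy
      simp only
      rw [hψ0 y hy.2, hψx, sub_zero, smul_zero]
    have hFcB : Set.EqOn
        (fun y : ℚ_[p] => c • kozyrevWavelet p b d ζ j y)
        (fun y => graphKernel U α K x y • (kozyrevWavelet p b d ζ j y - kozyrevWavelet p b d ζ j x))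
        {y : ℚ_[p] | ‖y - b‖ ≤ (p : ℝ) ^ (-d)} := by
      intro y hy
      simp only
      rw [hc y hy, hψx, sub_zero]
    have hintB : IntegrableOn
        (fun y => graphKernel U α K x y • (kozyrevWavelet p b d ζ j y - kozyrevWavelet p b d ζ j x))
        {y : ℚ_[p] | ‖y - b‖ ≤ (p : ℝ) ^ (-d)} μ := by
      apply IntegrableOn.congr_fun
        (f := fun y : ℚ_[p] => c • kozyrevWavelet p b d ζ j y) _ hFcB hmeasB
      exact Integrable.smul c ((wavelet_integrable μ hμ b d ζ j).integrableOn)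
    have hintV : IntegrableOn
        (fun y => graphKernel U α K x y • (kozyrevWavelet p b d ζ j y - kozyrevWavelet p b d ζ j x))
        (U v) μ := by
      rw [← Set.union_diff_cancel hB]
      apply hintB.union
      exact (integrableOn_zero).congr_fun hFzeroOut ((hmeasU v).diff hmeasB)
    rw [graphLaplacian, hZ, integral_biUnion_finset Finset.univ (fun w _ => hmeasU w) hpair
      (fun w _ => by
        by_cases hw : w = v
        · subst hw; exact hintV
        · exact (integrableOn_zero).congr_fun (hFzeroW w hw) (hmeasU w))]
    apply Finset.sum_eq_zero
    intro w _
    by_cases hw : w = v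
    · subst hw
      rw [← integral_inter_add_diff hmeasB hintV,
        Set.inter_eq_self_of_subset_right hB,
        ← setIntegral_congr_fun hmeasB hFcB,
        ← setIntegral_congr_fun ((hmeasU w).diff hmeasB) hFzeroOut,
        integral_zero, add_zero, integral_smul,
        wavelet_integral_ball μ hμ b d ζ hζ j hj1 hj2, smul_zero]
    · rw [← setIntegral_congr_fun (hmeasU w) (hFzeroW w hw), integral_zero]
end
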